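/- Loosened one-shot multiple description bound: Under the setup of the one-shot multiple description theorem (source pmf q_S, conditional pmf q_{U₀U₁U₂|S}, reconstruction functions ŝ₀, ŝ₁, ŝ₂, distortion measures d₀, d₁, d₂ and levels D₀, D₁, D₂, positive integers M₁, M₂ and a common divisor J₀ of M₁ and M₂, with joint pmf q(s,u₀,u₁,u₂) = q(s)q(u₀,u₁,u₂|s)), for every γ > 0 there exists an (M₁,M₂)-code whose probability of excess distortion satisfies P[ d₀(S,Ŝ₀) > D₀ or d₁(S,Ŝ₁) > D₁ or d₂(S,Ŝ₂) > D₂ ] ≤ P_q[ d₀(S, ŝ₀(U₀,U₁,U₂)) > D₀, or d₁(S, ŝ₁(U₀,U₁)) > D₁, or d₂(S, ŝ₂(U₀,U₂)) > D₂, or log J₀ − i_q(S;U₀) < γ, or log M₁ − i_q(S;U₀U₁) < γ, or log M₂ − i_q(S;U₀U₂) < γ, or log( M₁M₂/J₀ ) − i_q(S;U₀U₁U₂) − i_q(U₁;U₂|U₀) < γ ] + 4·2^{−γ}. -/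

import Mathlib

open scoped BigOperators

/-- A pmf on a finite type, represented by a nonnegative real-valued function summing to 1. -/
structure FinPMF (α : Type) [Fintype α] where
  p : α → ℝ
  nonneg : ∀ a, 0 ≤ p a
  sum_eq_one : ∑ a, p a = 1

open Classical in
/-- Indicator of a proposition, as a real number. -/
noncomputable def ind (P : Prop) : ℝ := if P then 1 else 0

variable {S U0 U1 U2 R0 R1 R2 : Type}
  [Fintype S] [Fintype U0] [Fintype U1] [Fintype U2]
  [Fintype R0] [Fintype R1] [Fintype R2]

/-- The joint pmf `q(s,u₀,u₁,u₂) = q(s) q(u₀,u₁,u₂|s)`. -/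
noncomputable def qMD (qS : FinPMF S) (qU : S → FinPMF (U0 × U1 × U2))
    (s : S) (u0 : U0) (u1 : U1) (u2 : U2) : ℝ :=
  qS.p s * (qU s).p (u0, u1, u2)

noncomputable def mSU0 (qS : FinPMF S) (qU : S → FinPMF (U0 × U1 × U2))
    (s : S) (u0 : U0) : ℝ :=
  ∑ u1 : U1, ∑ u2 : U2, qMD qS qU s u0 u1 u2

noncomputable def mU0 (qS : FinPMF S) (qU : S → FinPMF (U0 × U1 × U2)) (u0 : U0) : ℝ :=
  ∑ s : S, mSU0 qS qU s u0

noncomputable def mSU01 (qS : FinPMF S) (qU : S → FinPMF (U0 × U1 × U2))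
    (s : S) (u0 : U0) (u1 : U1) : ℝ :=
  ∑ u2 : U2, qMD qS qU s u0 u1 u2

noncomputable def mU01 (qS : FinPMF S) (qU : S → FinPMF (U0 × U1 × U2))
    (u0 : U0) (u1 : U1) : ℝ :=
  ∑ s : S, mSU01 qS qU s u0 u1

noncomputable def mSU02 (qS : FinPMF S) (qU : S → FinPMF (U0 × U1 × U2))
    (s : S) (u0 : U0) (u2 : U2) : ℝ :=
  ∑ u1 : U1, qMD qS qU s u0 u1 u2

noncomputable def mU02 (qS : FinPMF S) (qU : S → FinPMF (U0 × U1 × U2))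
    (u0 : U0) (u2 : U2) : ℝ :=
  ∑ s : S, mSU02 qS qU s u0 u2

noncomputable def mU012 (qS : FinPMF S) (qU : S → FinPMF (U0 × U1 × U2))
    (u0 : U0) (u1 : U1) (u2 : U2) : ℝ :=
  ∑ s : S, qMD qS qU s u0 u1 u2

/-- Information density `i_q(S;U₀)`. -/
noncomputable def iSU0 (qS : FinPMF S) (qU : S → FinPMF (U0 × U1 × U2))
    (s : S) (u0 : U0) : ℝ :=
  Real.logb 2 (mSU0 qS qU s u0 / (qS.p s * mU0 qS qU u0))

/-- Information density `i_q(S;U₀U₁)`, treating `(U₀,U₁)` as a single variable. -/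
noncomputable def iSU01 (qS : FinPMF S) (qU : S → FinPMF (U0 × U1 × U2))
    (s : S) (u0 : U0) (u1 : U1) : ℝ :=
  Real.logb 2 (mSU01 qS qU s u0 u1 / (qS.p s * mU01 qS qU u0 u1))

/-- Information density `i_q(S;U₀U₂)`, treating `(U₀,U₂)` as a single variable. -/
noncomputable def iSU02 (qS : FinPMF S) (qU : S → FinPMF (U0 × U1 × U2))
    (s : S) (u0 : U0) (u2 : U2) : ℝ :=
  Real.logb 2 (mSU02 qS qU s u0 u2 / (qS.p s * mU02 qS qU u0 u2))

/-- Information density `i_q(S;U₀U₁U₂)`, treating `(U₀,U₁,U₂)` as a single variable. -/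
noncomputable def iSU012 (qS : FinPMF S) (qU : S → FinPMF (U0 × U1 × U2))
    (s : S) (u0 : U0) (u1 : U1) (u2 : U2) : ℝ :=
  Real.logb 2 (qMD qS qU s u0 u1 u2 / (qS.p s * mU012 qS qU u0 u1 u2))

/-- Conditional information density `i_q(U₁;U₂|U₀)`. -/
noncomputable def iU1U2cU0 (qS : FinPMF S) (qU : S → FinPMF (U0 × U1 × U2))
    (u0 : U0) (u1 : U1) (u2 : U2) : ℝ :=
  Real.logb 2 (mU012 qS qU u0 u1 u2 * mU0 qS qU u0 /
    (mU01 qS qU u0 u1 * mU02 qS qU u0 u2))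

/-- Probability of excess distortion of an `(M₁,M₂)`-code for multiple description
coding. -/
noncomputable def pExcessMD (M1 M2 : ℕ) (qS : FinPMF S)
    (d0 : S → R0 → ℝ) (d1 : S → R1 → ℝ) (d2 : S → R2 → ℝ) (D0 D1 D2 : ℝ)
    (enc : S → FinPMF (Fin M1 × Fin M2)) (dec0 : Fin M1 × Fin M2 → FinPMF R0)
    (dec1 : Fin M1 → FinPMF R1) (dec2 : Fin M2 → FinPMF R2) : ℝ :=
  ∑ s : S, ∑ m : Fin M1 × Fin M2, ∑ r0 : R0, ∑ r1 : R1, ∑ r2 : R2,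
    qS.p s * (enc s).p m * (dec0 m).p r0 * (dec1 m.1).p r1 * (dec2 m.2).p r2 *
      ind (D0 < d0 s r0 ∨ D1 < d1 s r1 ∨ D2 < d2 s r2)

section AuxHelpers

open Finset

lemma ind_nonneg (P : Prop) : 0 ≤ ind P := by
  unfold ind; split <;> norm_num

lemma ind_le_one (P : Prop) : ind P ≤ 1 := by
  unfold ind; split <;> norm_num

lemma ind_true {P : Prop} (h : P) : ind P = 1 := by
  unfold ind; exact if_pos h

lemma ind_false {P : Prop} (h : ¬ P) : ind P = 0 := by
  unfold ind; exact if_neg h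

lemma ind_mono {P Q : Prop} (h : P → Q) : ind P ≤ ind Q := by
  classical
  by_cases hP : P
  · rw [ind_true hP, ind_true (h hP)]
  · rw [ind_false hP]; exact ind_nonneg Q

lemma ind_forall_prod {ι : Type} [Fintype ι] (P : ι → Prop) :
    ind (∀ i, P i) = ∏ i, ind (P i) := by
  classical
  by_cases h : ∀ i, P i
  · rw [ind_true h]
    rw [Finset.prod_eq_one (fun i _ => ind_true (h i))]
  · rw [ind_false h]
    push_neg at h
    obtain ⟨i0, hi0⟩ := h
    exact (Finset.prod_eq_zero (mem_univ i0) (ind_false hi0)).symm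

lemma ind_one_sub_not (P : Prop) : ind P = 1 - ind (¬ P) := by
  classical
  by_cases h : P
  · rw [ind_true h, ind_false (not_not_intro h)]; ring
  · rw [ind_false h, ind_true h]; ring

lemma sum_pos_exists_pos {α : Type} [Fintype α] {f : α → ℝ}
    (hf : ∀ a, 0 ≤ f a) (h : 0 < ∑ a, f a) : ∃ a, 0 < f a := by
  by_contra hc
  push_neg at hc
  have : ∑ a, f a = 0 := le_antisymm (Finset.sum_nonpos (fun a _ => hc a)) (le_of_lt h)
  rw [this] at h; exact lt_irrefl 0 h

namespace FinPMF

variable {α β : Type} [Fintype α] [Fintype β]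

lemma le_one (μ : FinPMF α) (a : α) : μ.p a ≤ 1 := by
  have h1 : μ.p a ≤ ∑ b, μ.p b :=
    Finset.single_le_sum (fun b _ => μ.nonneg b) (mem_univ a)
  rw [μ.sum_eq_one] at h1; exact h1

open Classical in
/-- point mass -/
noncomputable def dirac (a : α) : FinPMF α :=
  ⟨fun b => if b = a then 1 else 0, fun b => by by_cases h : b = a <;> simp [h], by
    simp⟩

/-- pushforward of a pmf along a map -/
noncomputable def map [DecidableEq β] (f : α → β) (μ : FinPMF α) : FinPMF β :=
  ⟨fun b => ∑ a ∈ Finset.univ.filter (fun a => f a = b), μ.p a,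
   fun b => Finset.sum_nonneg (fun a _ => μ.nonneg a), by
    rw [Finset.sum_fiberwise_of_maps_to (fun a _ => mem_univ (f a))]
    exact μ.sum_eq_one⟩

lemma map_apply [DecidableEq β] (f : α → β) (μ : FinPMF α) (b : β) :
    (map f μ).p b = ∑ a ∈ Finset.univ.filter (fun a => f a = b), μ.p a := by
  simp [map]

open Classical in
/-- normalized pmf from nonnegative weights, with point-mass fallback -/
noncomputable def norm (w : α → ℝ) (hw : ∀ a, 0 ≤ w a) (a0 : α) : FinPMF α :=
  if h : 0 < ∑ a, w a then
    ⟨fun a => w a / ∑ a', w a', fun a => div_nonneg (hw a) (le_of_lt h), by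
      rw [← Finset.sum_div, div_self (ne_of_gt h)]⟩
  else dirac a0

open Classical in
lemma norm_apply_of_pos {w : α → ℝ} {hw : ∀ a, 0 ≤ w a} {a0 : α}
    (h : 0 < ∑ a, w a) (a : α) : (norm w hw a0).p a = w a / ∑ a', w a' := by
  simp [norm, h]

end FinPMF

lemma sum_pi_prod {n : ℕ} {α : Type} [Fintype α] (p : Fin n → α → ℝ) :
    ∑ f : Fin n → α, ∏ i, p i (f i) = ∏ i, ∑ x, p i x := by
  classical
  rw [Finset.prod_univ_sum, Fintype.piFinset_univ]

lemma sum_pi_prod_single {n : ℕ} {α : Type} [Fintype α] (p : α → ℝ)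
    (hp : ∑ x, p x = 1) (k : Fin n) (F : α → ℝ) :
    ∑ f : Fin n → α, (∏ i, p (f i)) * F (f k) = ∑ x, p x * F x := by
  classical
  have h1 : ∀ f : Fin n → α, (∏ i, p (f i)) * F (f k)
      = ∏ i, (p (f i) * (if i = k then F (f i) else 1)) := by
    intro f
    rw [Finset.prod_mul_distrib]
    congr 1
    simp [Finset.prod_ite_eq']
  simp_rw [h1]
  rw [sum_pi_prod (fun i x => p x * (if i = k then F x else 1))]
  have h2 : ∀ i : Fin n, (∑ x, p x * (if i = k then F x else 1))
      = if i = k then ∑ x, p x * F x else 1 := by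
    intro i
    by_cases h : i = k <;> simp [h, hp]
  simp_rw [h2]
  simp [Finset.prod_ite_eq']

lemma sum_pi_prod_pair {n : ℕ} {α : Type} [Fintype α] (p : α → ℝ)
    (hp : ∑ x, p x = 1) {k k' : Fin n} (hkk : k ≠ k') (F G : α → ℝ) :
    ∑ f : Fin n → α, (∏ i, p (f i)) * (F (f k) * G (f k'))
      = (∑ x, p x * F x) * (∑ x, p x * G x) := by
  classical
  have h1 : ∀ f : Fin n → α, (∏ i, p (f i)) * (F (f k) * G (f k'))
      = ∏ i, (p (f i) * ((if i = k then F (f i) else 1) * (if i = k' then G (f i) else 1))) := by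
    intro f
    simp_rw [← mul_assoc]
    rw [Finset.prod_mul_distrib, Finset.prod_mul_distrib]
    congr 2
    · simp [Finset.prod_ite_eq']
    · simp [Finset.prod_ite_eq']
  simp_rw [h1]
  rw [sum_pi_prod (fun i x => p x * ((if i = k then F x else 1) * (if i = k' then G x else 1)))]
  have h2 : ∀ i : Fin n, (∑ x, p x * ((if i = k then F x else 1) * (if i = k' then G x else 1)))
      = (if i = k then ∑ x, p x * F x else 1) * (if i = k' then ∑ x, p x * G x else 1) := by
    intro i
    by_cases h : i = k
    · subst h
      simp [hkk, hp]
    · by_cases h' : i = k'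
      · subst h'
        simp [Ne.symm hkk, hp]
      · simp [h, h', hp]
  simp_rw [h2]
  rw [Finset.prod_mul_distrib]
  congr 1 <;> simp [Finset.prod_ite_eq']

open Classical in
lemma sum_pair_ite {β : Type} [Fintype β] (a b : ℝ) :
    ∑ q : β × β, (if q.1 = q.2 then a else b)
      = (Fintype.card β : ℝ) * a + ((Fintype.card β : ℝ)^2 - Fintype.card β) * b := by
  classical
  have h1 : ∀ q : β × β, (if q.1 = q.2 then a else b)
      = b + (if q.1 = q.2 then a - b else 0) := by
    intro q; split <;> ring
  simp_rw [h1, Finset.sum_add_distrib]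
  have h2 : ∑ q : β × β, (if q.1 = q.2 then a - b else 0)
      = (Fintype.card β : ℝ) * (a - b) := by
    rw [Fintype.sum_prod_type]
    have h3 : ∀ x : β, (∑ y : β, if x = y then a - b else 0) = a - b := by
      intro x
      rw [Finset.sum_ite_eq]
      simp
    simp_rw [h3]
    rw [Finset.sum_const, Finset.card_univ, nsmul_eq_mul]
  rw [h2, Finset.sum_const, Finset.card_univ, Fintype.card_prod, nsmul_eq_mul]
  push_cast
  ring

end AuxHelpers
section Covering

open Finset

open Classical in
lemma ind_sq (P : Prop) : ind P * ind P = ind P := by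
  by_cases h : P <;> simp [h, ind]

open Classical in
lemma sum_ite_pairs {n2 : ℕ} (a b : ℝ) :
    ∑ l : Fin n2, ∑ l' : Fin n2, (if l = l' then a else b)
      = (n2 : ℝ) * a + ((n2:ℝ)^2 - n2) * b := by
  have h1 : ∀ l l' : Fin n2, (if l = l' then a else b)
      = b + (if l = l' then a - b else 0) := by
    intro l l'; split <;> ring
  simp_rw [h1, Finset.sum_add_distrib, Finset.sum_const, Finset.sum_ite_eq,
    Finset.card_univ, Fintype.card_fin]
  simp only [Finset.mem_univ, if_true, nsmul_eq_mul]
  rw [Finset.sum_const, Finset.card_univ, Fintype.card_fin, nsmul_eq_mul]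
  ring

open Classical in
lemma sum_pair_ite2 {n1 n2 : ℕ} (a b c d : ℝ) :
    ∑ q : Fin n1 × Fin n2, ∑ q' : Fin n1 × Fin n2,
      (if q.1 = q'.1 then (if q.2 = q'.2 then a else b)
       else (if q.2 = q'.2 then c else d))
    = ((n1:ℝ)*n2) * a + ((n1:ℝ) * ((n2:ℝ)^2 - n2)) * b
      + (((n1:ℝ)^2 - n1) * n2) * c + (((n1:ℝ)^2 - n1) * ((n2:ℝ)^2 - n2)) * d := by
  rw [Fintype.sum_prod_type]
  have h1 : ∀ k : Fin n1, ∑ l : Fin n2, ∑ q' : Fin n1 × Fin n2,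
      (if (k,l).1 = q'.1 then (if (k,l).2 = q'.2 then a else b)
       else (if (k,l).2 = q'.2 then c else d))
      = ∑ k' : Fin n1, ∑ l : Fin n2, ∑ l' : Fin n2,
      (if k = k' then (if l = l' then a else b) else (if l = l' then c else d)) := by
    intro k
    simp_rw [Fintype.sum_prod_type]
    exact Finset.sum_comm
  simp_rw [h1]
  have h2 : ∀ k k' : Fin n1, ∑ l : Fin n2, ∑ l' : Fin n2,
      (if k = k' then (if l = l' then a else b) else (if l = l' then c else d))
      = (if k = k' then ((n2:ℝ) * a + ((n2:ℝ)^2 - n2) * b)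
         else ((n2:ℝ) * c + ((n2:ℝ)^2 - n2) * d)) := by
    intro k k'
    by_cases h : k = k' <;> simp [h, sum_ite_pairs]
  simp_rw [h2]
  rw [sum_ite_pairs]
  ring

variable {V1 V2 : Type} [Fintype V1] [Fintype V2]

/-- importance weight -/
noncomputable def cvWT (p1 : V1 → ℝ) (p2 : V2 → ℝ) (w : V1 → V2 → ℝ)
    (x : V1) (y : V2) : ℝ := w x y / (p1 x * p2 y)

/-- row weighted sum -/
noncomputable def cvSY (p1 : V1 → ℝ) (p2 : V2 → ℝ) (w : V1 → V2 → ℝ)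
    (x : V1) : ℝ := ∑ y, p2 y * cvWT p1 p2 w x y

/-- column weighted sum -/
noncomputable def cvSX (p1 : V1 → ℝ) (p2 : V2 → ℝ) (w : V1 → V2 → ℝ)
    (y : V2) : ℝ := ∑ x, p1 x * cvWT p1 p2 w x y

set_option maxHeartbeats 2000000 in
/-- one-shot mutual covering core bound, via a weighted second-moment method -/
lemma mutual_covering {n1 n2 : ℕ}
    (hn1 : 0 < n1) (hn2 : 0 < n2)
    (p1 : V1 → ℝ) (p2 : V2 → ℝ) (hp1 : ∀ x, 0 ≤ p1 x) (hp2 : ∀ y, 0 ≤ p2 y)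
    (hp1s : ∑ x, p1 x = 1) (hp2s : ∑ y, p2 y = 1)
    (w : V1 → V2 → ℝ) (hw : ∀ x y, 0 ≤ w x y) {A : ℝ} (hA : 0 < A)
    (hpair : ∀ x y, w x y ≤ A * n1 * n2 * (p1 x * p2 y))
    (hrow : ∀ x, ∑ y, w x y ≤ A * n1 * p1 x)
    (hcol : ∀ y, ∑ x, w x y ≤ A * n2 * p2 y)
    (htot : ∑ x, ∑ y, w x y ≤ A) :
    (∑ x, ∑ y, w x y) / (4 * A) ≤
      ∑ σ : (Fin n1 → V1) × (Fin n2 → V2),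
        ((∏ k, p1 (σ.1 k)) * (∏ l, p2 (σ.2 l))) *
          ind (∃ k l, 0 < w (σ.1 k) (σ.2 l)) := by
  classical
  have hψ0 : 0 ≤ ∑ x, ∑ y, w x y :=
    Finset.sum_nonneg fun x _ => Finset.sum_nonneg fun y _ => hw x y
  have hP0 : ∀ σ : (Fin n1 → V1) × (Fin n2 → V2),
      0 ≤ (∏ k, p1 (σ.1 k)) * (∏ l, p2 (σ.2 l)) := fun σ =>
    mul_nonneg (Finset.prod_nonneg fun k _ => hp1 _) (Finset.prod_nonneg fun l _ => hp2 _)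
  have hcov0 : 0 ≤ ∑ σ : (Fin n1 → V1) × (Fin n2 → V2),
      ((∏ k, p1 (σ.1 k)) * (∏ l, p2 (σ.2 l))) * ind (∃ k l, 0 < w (σ.1 k) (σ.2 l)) :=
    Finset.sum_nonneg fun σ _ => mul_nonneg (hP0 σ) (ind_nonneg _)
  rcases eq_or_lt_of_le hψ0 with h0 | hψpos
  · rw [← h0, zero_div]; exact hcov0
  have hn1R : (0:ℝ) < n1 := by exact_mod_cast hn1
  have hn2R : (0:ℝ) < n2 := by exact_mod_cast hn2
  have hwt0 : ∀ x y, 0 ≤ cvWT p1 p2 w x y := fun x y =>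
    div_nonneg (hw x y) (mul_nonneg (hp1 x) (hp2 y))
  have hppos : ∀ x y, 0 < w x y → 0 < p1 x * p2 y := by
    intro x y h
    by_contra hc
    push_neg at hc
    have h2 := hpair x y
    have h3 : A * ↑n1 * ↑n2 * (p1 x * p2 y) ≤ 0 :=
      mul_nonpos_of_nonneg_of_nonpos
        (mul_nonneg (mul_nonneg hA.le hn1R.le) hn2R.le) hc
    linarith
  have hid1 : ∀ x y, p1 x * (p2 y * cvWT p1 p2 w x y) = w x y := by
    intro x y
    rcases eq_or_lt_of_le (hw x y) with h | h
    · rw [cvWT, ← h, zero_div, mul_zero, mul_zero]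
    · have hpp := hppos x y h
      rw [cvWT, ← mul_assoc]
      field_simp
      exact div_self (ne_of_gt hpp)
  have hwt00 : ∀ x y, w x y = 0 → cvWT p1 p2 w x y = 0 := by
    intro x y h; rw [cvWT, h, zero_div]
  have hwtle : ∀ x y, 0 < w x y → cvWT p1 p2 w x y ≤ A * n1 * n2 := by
    intro x y h
    have hpp := hppos x y h
    rw [cvWT, div_le_iff₀ hpp]
    exact hpair x y
  have hSY0 : ∀ x, 0 ≤ cvSY p1 p2 w x := fun x =>
    Finset.sum_nonneg fun y _ => mul_nonneg (hp2 y) (hwt0 x y)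
  have hSX0 : ∀ y, 0 ≤ cvSX p1 p2 w y := fun y =>
    Finset.sum_nonneg fun x _ => mul_nonneg (hp1 x) (hwt0 x y)
  have hSYw : ∀ x, p1 x * cvSY p1 p2 w x = ∑ y, w x y := by
    intro x
    rw [cvSY, Finset.mul_sum]
    exact Finset.sum_congr rfl fun y _ => by rw [← mul_assoc, mul_assoc]; exact hid1 x y
  have hSXw : ∀ y, p2 y * cvSX p1 p2 w y = ∑ x, w x y := by
    intro y
    rw [cvSX, Finset.mul_sum]
    refine Finset.sum_congr rfl fun x _ => ?_
    rw [← hid1 x y]; ring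
  have hψ1 : ∑ x, p1 x * cvSY p1 p2 w x = ∑ x, ∑ y, w x y :=
    Finset.sum_congr rfl fun x _ => hSYw x
  have hψ2 : ∑ y, p2 y * cvSX p1 p2 w y = ∑ x, ∑ y, w x y := by
    rw [show (∑ x, ∑ y, w x y) = ∑ y, ∑ x, w x y from Finset.sum_comm]
    exact Finset.sum_congr rfl fun y _ => hSXw y
  have hSYle : ∀ x, 0 < ∑ y, w x y → cvSY p1 p2 w x ≤ A * n1 := by
    intro x h
    obtain ⟨y, hy⟩ := sum_pos_exists_pos (fun y => hw x y) h
    have hp1x : 0 < p1 x := by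
      have h2 := hppos x y hy
      rcases (mul_pos_iff.mp h2) with ⟨h1, _⟩ | ⟨h1, h1'⟩
      · exact h1
      · exact absurd (hp2 y) (not_le.mpr h1')
    have h1 : p1 x * cvSY p1 p2 w x ≤ A * n1 * p1 x := by rw [hSYw x]; exact hrow x
    nlinarith [hSY0 x]
  have hSXle : ∀ y, 0 < ∑ x, w x y → cvSX p1 p2 w y ≤ A * n2 := by
    intro y h
    obtain ⟨x, hx⟩ := sum_pos_exists_pos (fun x => hw x y) h
    have hp2y : 0 < p2 y := by
      have h2 := hppos x y hx
      rcases (mul_pos_iff.mp h2) with ⟨_, h1⟩ | ⟨h1', h1⟩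
      · exact h1
      · exact absurd (hp1 x) (not_le.mpr h1')
    have h1 : p2 y * cvSX p1 p2 w y ≤ A * n2 * p2 y := by rw [hSXw y]; exact hcol y
    nlinarith [hSX0 y]
  -- second moment pointwise bounds
  have hb11 : ∑ x, p1 x * (∑ y, p2 y * (cvWT p1 p2 w x y * cvWT p1 p2 w x y))
      ≤ A * n1 * n2 * ∑ x, ∑ y, w x y := by
    rw [Finset.mul_sum]
    refine Finset.sum_le_sum fun x _ => ?_
    rw [Finset.mul_sum, Finset.mul_sum]
    refine Finset.sum_le_sum fun y _ => ?_
    rcases eq_or_lt_of_le (hw x y) with h | h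
    · rw [hwt00 x y h.symm, ← h]
      ring_nf
      exact le_refl 0
    · have h1 : p1 x * (p2 y * (cvWT p1 p2 w x y * cvWT p1 p2 w x y))
          = w x y * cvWT p1 p2 w x y := by
        rw [← hid1 x y]; ring
      rw [h1]
      calc w x y * cvWT p1 p2 w x y ≤ w x y * (A * n1 * n2) :=
            mul_le_mul_of_nonneg_left (hwtle x y h) (hw x y)
        _ = A * n1 * n2 * w x y := by ring
  have hb12 : ∑ x, p1 x * (cvSY p1 p2 w x * cvSY p1 p2 w x)
      ≤ A * n1 * ∑ x, ∑ y, w x y := by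
    rw [Finset.mul_sum]
    refine Finset.sum_le_sum fun x _ => ?_
    rcases eq_or_lt_of_le (Finset.sum_nonneg fun y (_ : y ∈ univ) => hw x y) with h | h
    · have hSYx : cvSY p1 p2 w x = 0 := by
        have hz : ∀ y, w x y = 0 := by
          intro y
          have h2 := (Finset.sum_eq_zero_iff_of_nonneg (fun y _ => hw x y)).mp (h.symm)
          exact h2 y (mem_univ y)
        rw [cvSY]
        refine Finset.sum_eq_zero fun y _ => ?_
        rw [hwt00 x y (hz y), mul_zero]
      rw [hSYx, ← h]
      ring_nf
      exact le_refl 0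
    · have h1 : p1 x * (cvSY p1 p2 w x * cvSY p1 p2 w x)
          = (∑ y, w x y) * cvSY p1 p2 w x := by rw [← hSYw x]; ring
      rw [h1]
      calc (∑ y, w x y) * cvSY p1 p2 w x ≤ (∑ y, w x y) * (A * n1) :=
            mul_le_mul_of_nonneg_left (hSYle x h) h.le
        _ = A * n1 * ∑ y, w x y := by ring
  have hb21 : ∑ y, p2 y * (cvSX p1 p2 w y * cvSX p1 p2 w y)
      ≤ A * n2 * ∑ x, ∑ y, w x y := by
    rw [show (∑ x, ∑ y, w x y) = ∑ y, ∑ x, w x y from Finset.sum_comm, Finset.mul_sum]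
    refine Finset.sum_le_sum fun y _ => ?_
    rcases eq_or_lt_of_le (Finset.sum_nonneg fun x (_ : x ∈ univ) => hw x y) with h | h
    · have hSXy : cvSX p1 p2 w y = 0 := by
        have hz : ∀ x, w x y = 0 := by
          intro x
          have h2 := (Finset.sum_eq_zero_iff_of_nonneg (fun x _ => hw x y)).mp (h.symm)
          exact h2 x (mem_univ x)
        rw [cvSX]
        refine Finset.sum_eq_zero fun x _ => ?_
        rw [hwt00 x y (hz x), mul_zero]
      rw [hSXy, ← h]
      ring_nf
      exact le_refl 0
    · have h1 : p2 y * (cvSX p1 p2 w y * cvSX p1 p2 w y)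
          = (∑ x, w x y) * cvSX p1 p2 w y := by rw [← hSXw y]; ring
      rw [h1]
      calc (∑ x, w x y) * cvSX p1 p2 w y ≤ (∑ x, w x y) * (A * n2) :=
            mul_le_mul_of_nonneg_left (hSXle y h) h.le
        _ = A * n2 * ∑ x, w x y := by ring

  -- first moment evaluation
  have hM1 : ∀ (k : Fin n1) (l : Fin n2),
      ∑ σ : (Fin n1 → V1) × (Fin n2 → V2),
        ((∏ k', p1 (σ.1 k')) * (∏ l', p2 (σ.2 l'))) * cvWT p1 p2 w (σ.1 k) (σ.2 l)
      = ∑ x, ∑ y, w x y := by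
    intro k l
    rw [Fintype.sum_prod_type]
    have hinner : ∀ xs : Fin n1 → V1,
        ∑ ys : Fin n2 → V2,
          ((∏ k', p1 (xs k')) * (∏ l', p2 (ys l'))) * cvWT p1 p2 w (xs k) (ys l)
        = (∏ k', p1 (xs k')) * cvSY p1 p2 w (xs k) := by
      intro xs
      have h1 : ∀ ys : Fin n2 → V2,
          ((∏ k', p1 (xs k')) * (∏ l', p2 (ys l'))) * cvWT p1 p2 w (xs k) (ys l)
          = (∏ k', p1 (xs k')) * ((∏ l', p2 (ys l')) * cvWT p1 p2 w (xs k) (ys l)) := by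
        intro ys; ring
      simp_rw [h1]
      rw [← Finset.mul_sum]
      congr 1
      exact sum_pi_prod_single p2 hp2s l (fun y => cvWT p1 p2 w (xs k) y)
    simp_rw [hinner]
    rw [show (∑ x, ∑ y, w x y) = ∑ x, p1 x * cvSY p1 p2 w x from hψ1.symm]
    exact sum_pi_prod_single p1 hp1s k (cvSY p1 p2 w)
  -- second moment evaluations, by cases
  have hMaa : ∀ (k : Fin n1) (l : Fin n2),
      ∑ σ : (Fin n1 → V1) × (Fin n2 → V2),
        ((∏ k', p1 (σ.1 k')) * (∏ l', p2 (σ.2 l'))) *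
          (cvWT p1 p2 w (σ.1 k) (σ.2 l) * cvWT p1 p2 w (σ.1 k) (σ.2 l))
      = ∑ x, p1 x * (∑ y, p2 y * (cvWT p1 p2 w x y * cvWT p1 p2 w x y)) := by
    intro k l
    rw [Fintype.sum_prod_type]
    have hinner : ∀ xs : Fin n1 → V1,
        ∑ ys : Fin n2 → V2,
          ((∏ k', p1 (xs k')) * (∏ l', p2 (ys l'))) *
            (cvWT p1 p2 w (xs k) (ys l) * cvWT p1 p2 w (xs k) (ys l))
        = (∏ k', p1 (xs k')) *
            (∑ y, p2 y * (cvWT p1 p2 w (xs k) y * cvWT p1 p2 w (xs k) y)) := by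
      intro xs
      have h1 : ∀ ys : Fin n2 → V2,
          ((∏ k', p1 (xs k')) * (∏ l', p2 (ys l'))) *
            (cvWT p1 p2 w (xs k) (ys l) * cvWT p1 p2 w (xs k) (ys l))
          = (∏ k', p1 (xs k')) * ((∏ l', p2 (ys l')) *
              (cvWT p1 p2 w (xs k) (ys l) * cvWT p1 p2 w (xs k) (ys l))) := by
        intro ys; ring
      simp_rw [h1]
      rw [← Finset.mul_sum]
      congr 1
      exact sum_pi_prod_single p2 hp2s l
        (fun y => cvWT p1 p2 w (xs k) y * cvWT p1 p2 w (xs k) y)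
    simp_rw [hinner]
    exact sum_pi_prod_single p1 hp1s k
      (fun x => ∑ y, p2 y * (cvWT p1 p2 w x y * cvWT p1 p2 w x y))
  have hMab : ∀ (k : Fin n1) {l l' : Fin n2}, l ≠ l' →
      ∑ σ : (Fin n1 → V1) × (Fin n2 → V2),
        ((∏ k', p1 (σ.1 k')) * (∏ l'', p2 (σ.2 l''))) *
          (cvWT p1 p2 w (σ.1 k) (σ.2 l) * cvWT p1 p2 w (σ.1 k) (σ.2 l'))
      = ∑ x, p1 x * (cvSY p1 p2 w x * cvSY p1 p2 w x) := by
    intro k l l' hll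
    rw [Fintype.sum_prod_type]
    have hinner : ∀ xs : Fin n1 → V1,
        ∑ ys : Fin n2 → V2,
          ((∏ k', p1 (xs k')) * (∏ l'', p2 (ys l''))) *
            (cvWT p1 p2 w (xs k) (ys l) * cvWT p1 p2 w (xs k) (ys l'))
        = (∏ k', p1 (xs k')) * (cvSY p1 p2 w (xs k) * cvSY p1 p2 w (xs k)) := by
      intro xs
      have h1 : ∀ ys : Fin n2 → V2,
          ((∏ k', p1 (xs k')) * (∏ l'', p2 (ys l''))) *
            (cvWT p1 p2 w (xs k) (ys l) * cvWT p1 p2 w (xs k) (ys l'))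
          = (∏ k', p1 (xs k')) * ((∏ l'', p2 (ys l'')) *
              (cvWT p1 p2 w (xs k) (ys l) * cvWT p1 p2 w (xs k) (ys l'))) := by
        intro ys; ring
      simp_rw [h1]
      rw [← Finset.mul_sum]
      congr 1
      exact sum_pi_prod_pair p2 hp2s hll
        (fun y => cvWT p1 p2 w (xs k) y) (fun y => cvWT p1 p2 w (xs k) y)
    simp_rw [hinner]
    exact sum_pi_prod_single p1 hp1s k
      (fun x => cvSY p1 p2 w x * cvSY p1 p2 w x)
  have hMba : ∀ {k k' : Fin n1} (l : Fin n2), k ≠ k' →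
      ∑ σ : (Fin n1 → V1) × (Fin n2 → V2),
        ((∏ k'', p1 (σ.1 k'')) * (∏ l', p2 (σ.2 l'))) *
          (cvWT p1 p2 w (σ.1 k) (σ.2 l) * cvWT p1 p2 w (σ.1 k') (σ.2 l))
      = ∑ y, p2 y * (cvSX p1 p2 w y * cvSX p1 p2 w y) := by
    intro k k' l hkk
    rw [Fintype.sum_prod_type]
    rw [Finset.sum_comm]
    have hinner : ∀ ys : Fin n2 → V2,
        ∑ xs : Fin n1 → V1,
          ((∏ k'', p1 (xs k'')) * (∏ l', p2 (ys l'))) *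
            (cvWT p1 p2 w (xs k) (ys l) * cvWT p1 p2 w (xs k') (ys l))
        = (∏ l', p2 (ys l')) * (cvSX p1 p2 w (ys l) * cvSX p1 p2 w (ys l)) := by
      intro ys
      have h1 : ∀ xs : Fin n1 → V1,
          ((∏ k'', p1 (xs k'')) * (∏ l', p2 (ys l'))) *
            (cvWT p1 p2 w (xs k) (ys l) * cvWT p1 p2 w (xs k') (ys l))
          = (∏ l', p2 (ys l')) * ((∏ k'', p1 (xs k'')) *
              (cvWT p1 p2 w (xs k) (ys l) * cvWT p1 p2 w (xs k') (ys l))) := by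
        intro xs; ring
      simp_rw [h1]
      rw [← Finset.mul_sum]
      congr 1
      exact sum_pi_prod_pair p1 hp1s hkk
        (fun x => cvWT p1 p2 w x (ys l)) (fun x => cvWT p1 p2 w x (ys l))
    simp_rw [hinner]
    exact sum_pi_prod_single p2 hp2s l
      (fun y => cvSX p1 p2 w y * cvSX p1 p2 w y)
  have hMbb : ∀ {k k' : Fin n1} {l l' : Fin n2}, k ≠ k' → l ≠ l' →
      ∑ σ : (Fin n1 → V1) × (Fin n2 → V2),
        ((∏ k'', p1 (σ.1 k'')) * (∏ l'', p2 (σ.2 l''))) *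
          (cvWT p1 p2 w (σ.1 k) (σ.2 l) * cvWT p1 p2 w (σ.1 k') (σ.2 l'))
      = (∑ x, ∑ y, w x y) * (∑ x, ∑ y, w x y) := by
    intro k k' l l' hkk hll
    rw [Fintype.sum_prod_type]
    have hinner : ∀ xs : Fin n1 → V1,
        ∑ ys : Fin n2 → V2,
          ((∏ k'', p1 (xs k'')) * (∏ l'', p2 (ys l''))) *
            (cvWT p1 p2 w (xs k) (ys l) * cvWT p1 p2 w (xs k') (ys l'))
        = (∏ k'', p1 (xs k'')) * (cvSY p1 p2 w (xs k) * cvSY p1 p2 w (xs k')) := by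
      intro xs
      have h1 : ∀ ys : Fin n2 → V2,
          ((∏ k'', p1 (xs k'')) * (∏ l'', p2 (ys l''))) *
            (cvWT p1 p2 w (xs k) (ys l) * cvWT p1 p2 w (xs k') (ys l'))
          = (∏ k'', p1 (xs k'')) * ((∏ l'', p2 (ys l'')) *
              (cvWT p1 p2 w (xs k) (ys l) * cvWT p1 p2 w (xs k') (ys l'))) := by
        intro ys; ring
      simp_rw [h1]
      rw [← Finset.mul_sum]
      congr 1
      exact sum_pi_prod_pair p2 hp2s hll
        (fun y => cvWT p1 p2 w (xs k) y) (fun y => cvWT p1 p2 w (xs k') y)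
    simp_rw [hinner]
    rw [show ((∑ x, ∑ y, w x y) * (∑ x, ∑ y, w x y))
        = (∑ x, p1 x * cvSY p1 p2 w x) * (∑ x, p1 x * cvSY p1 p2 w x) by rw [hψ1]]
    exact sum_pi_prod_pair p1 hp1s hkk (cvSY p1 p2 w) (cvSY p1 p2 w)
  -- second moment assembled
  have hEZ2 : ∑ σ : (Fin n1 → V1) × (Fin n2 → V2),
      ((∏ k, p1 (σ.1 k)) * (∏ l, p2 (σ.2 l))) *
        ((∑ q : Fin n1 × Fin n2, cvWT p1 p2 w (σ.1 q.1) (σ.2 q.2)) *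
         (∑ q : Fin n1 × Fin n2, cvWT p1 p2 w (σ.1 q.1) (σ.2 q.2)))
      = ((n1:ℝ)*n2) * (∑ x, p1 x * (∑ y, p2 y * (cvWT p1 p2 w x y * cvWT p1 p2 w x y)))
        + ((n1:ℝ) * ((n2:ℝ)^2 - n2)) * (∑ x, p1 x * (cvSY p1 p2 w x * cvSY p1 p2 w x))
        + (((n1:ℝ)^2 - n1) * n2) * (∑ y, p2 y * (cvSX p1 p2 w y * cvSX p1 p2 w y))
        + (((n1:ℝ)^2 - n1) * ((n2:ℝ)^2 - n2)) * ((∑ x, ∑ y, w x y) * (∑ x, ∑ y, w x y)) := by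
    have hexp : ∀ σ : (Fin n1 → V1) × (Fin n2 → V2),
        ((∏ k, p1 (σ.1 k)) * (∏ l, p2 (σ.2 l))) *
          ((∑ q : Fin n1 × Fin n2, cvWT p1 p2 w (σ.1 q.1) (σ.2 q.2)) *
           (∑ q : Fin n1 × Fin n2, cvWT p1 p2 w (σ.1 q.1) (σ.2 q.2)))
        = ∑ q : Fin n1 × Fin n2, ∑ q' : Fin n1 × Fin n2,
            ((∏ k, p1 (σ.1 k)) * (∏ l, p2 (σ.2 l))) *
              (cvWT p1 p2 w (σ.1 q.1) (σ.2 q.2) * cvWT p1 p2 w (σ.1 q'.1) (σ.2 q'.2)) := by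
      intro σ
      rw [Finset.sum_mul_sum, Finset.mul_sum]
      exact Finset.sum_congr rfl fun q _ => Finset.mul_sum _ _ _
    simp_rw [hexp]
    rw [Finset.sum_comm]
    have hsw : ∀ q : Fin n1 × Fin n2,
        (∑ σ : (Fin n1 → V1) × (Fin n2 → V2), ∑ q' : Fin n1 × Fin n2,
          ((∏ k, p1 (σ.1 k)) * (∏ l, p2 (σ.2 l))) *
            (cvWT p1 p2 w (σ.1 q.1) (σ.2 q.2) * cvWT p1 p2 w (σ.1 q'.1) (σ.2 q'.2)))
        = ∑ q' : Fin n1 × Fin n2, ∑ σ : (Fin n1 → V1) × (Fin n2 → V2),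
          ((∏ k, p1 (σ.1 k)) * (∏ l, p2 (σ.2 l))) *
            (cvWT p1 p2 w (σ.1 q.1) (σ.2 q.2) * cvWT p1 p2 w (σ.1 q'.1) (σ.2 q'.2)) :=
      fun q => Finset.sum_comm
    simp_rw [hsw]
    have heval : ∀ q q' : Fin n1 × Fin n2,
        (∑ σ : (Fin n1 → V1) × (Fin n2 → V2),
          ((∏ k, p1 (σ.1 k)) * (∏ l, p2 (σ.2 l))) *
            (cvWT p1 p2 w (σ.1 q.1) (σ.2 q.2) * cvWT p1 p2 w (σ.1 q'.1) (σ.2 q'.2)))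
        = (if q.1 = q'.1 then
            (if q.2 = q'.2 then
              (∑ x, p1 x * (∑ y, p2 y * (cvWT p1 p2 w x y * cvWT p1 p2 w x y)))
             else (∑ x, p1 x * (cvSY p1 p2 w x * cvSY p1 p2 w x)))
           else
            (if q.2 = q'.2 then (∑ y, p2 y * (cvSX p1 p2 w y * cvSX p1 p2 w y))
             else ((∑ x, ∑ y, w x y) * (∑ x, ∑ y, w x y)))) := by
      intro q q'
      by_cases h1 : q.1 = q'.1
      · by_cases h2 : q.2 = q'.2
        · rw [if_pos h1, if_pos h2, ← h1, ← h2]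
          exact hMaa q.1 q.2
        · rw [if_pos h1, if_neg h2, ← h1]
          exact hMab q.1 h2
      · by_cases h2 : q.2 = q'.2
        · rw [if_neg h1, if_pos h2, ← h2]
          exact hMba q.2 h1
        · rw [if_neg h1, if_neg h2]
          exact hMbb h1 h2
    simp_rw [heval]
    exact sum_pair_ite2 _ _ _ _
  -- first moment assembled
  have hEZ1 : ∑ σ : (Fin n1 → V1) × (Fin n2 → V2),
      ((∏ k, p1 (σ.1 k)) * (∏ l, p2 (σ.2 l))) *
        (∑ q : Fin n1 × Fin n2, cvWT p1 p2 w (σ.1 q.1) (σ.2 q.2))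
      = ((n1:ℝ)*n2) * (∑ x, ∑ y, w x y) := by
    have hexp : ∀ σ : (Fin n1 → V1) × (Fin n2 → V2),
        ((∏ k, p1 (σ.1 k)) * (∏ l, p2 (σ.2 l))) *
          (∑ q : Fin n1 × Fin n2, cvWT p1 p2 w (σ.1 q.1) (σ.2 q.2))
        = ∑ q : Fin n1 × Fin n2,
            ((∏ k, p1 (σ.1 k)) * (∏ l, p2 (σ.2 l))) * cvWT p1 p2 w (σ.1 q.1) (σ.2 q.2) :=
      fun σ => Finset.mul_sum _ _ _
    simp_rw [hexp]
    rw [Finset.sum_comm]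
    have heval : ∀ q : Fin n1 × Fin n2,
        (∑ σ : (Fin n1 → V1) × (Fin n2 → V2),
          ((∏ k, p1 (σ.1 k)) * (∏ l, p2 (σ.2 l))) * cvWT p1 p2 w (σ.1 q.1) (σ.2 q.2))
        = ∑ x, ∑ y, w x y := fun q => hM1 q.1 q.2
    simp_rw [heval]
    rw [Finset.sum_const, Finset.card_univ, Fintype.card_prod, Fintype.card_fin,
      Fintype.card_fin, nsmul_eq_mul]
    push_cast
    ring
  -- Z vanishes when no covered pair
  have hZzero : ∀ σ : (Fin n1 → V1) × (Fin n2 → V2),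
      ¬ (∃ k l, 0 < w (σ.1 k) (σ.2 l)) →
      (∑ q : Fin n1 × Fin n2, cvWT p1 p2 w (σ.1 q.1) (σ.2 q.2)) = 0 := by
    intro σ hex
    push_neg at hex
    refine Finset.sum_eq_zero fun q _ => ?_
    exact hwt00 _ _ (le_antisymm (hex q.1 q.2) (hw _ _))
  -- Cauchy-Schwarz
  have hCS := Finset.sum_mul_sq_le_sq_mul_sq Finset.univ
    (fun σ : (Fin n1 → V1) × (Fin n2 → V2) =>
      Real.sqrt ((∏ k, p1 (σ.1 k)) * (∏ l, p2 (σ.2 l))) * ind (∃ k l, 0 < w (σ.1 k) (σ.2 l)))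
    (fun σ : (Fin n1 → V1) × (Fin n2 → V2) =>
      Real.sqrt ((∏ k, p1 (σ.1 k)) * (∏ l, p2 (σ.2 l))) *
        (∑ q : Fin n1 × Fin n2, cvWT p1 p2 w (σ.1 q.1) (σ.2 q.2)))
  have hfg : ∀ σ : (Fin n1 → V1) × (Fin n2 → V2),
      (Real.sqrt ((∏ k, p1 (σ.1 k)) * (∏ l, p2 (σ.2 l))) * ind (∃ k l, 0 < w (σ.1 k) (σ.2 l)))
        * (Real.sqrt ((∏ k, p1 (σ.1 k)) * (∏ l, p2 (σ.2 l))) *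
            (∑ q : Fin n1 × Fin n2, cvWT p1 p2 w (σ.1 q.1) (σ.2 q.2)))
      = ((∏ k, p1 (σ.1 k)) * (∏ l, p2 (σ.2 l))) *
          (∑ q : Fin n1 × Fin n2, cvWT p1 p2 w (σ.1 q.1) (σ.2 q.2)) := by
    intro σ
    have h1 : Real.sqrt ((∏ k, p1 (σ.1 k)) * (∏ l, p2 (σ.2 l)))
        * Real.sqrt ((∏ k, p1 (σ.1 k)) * (∏ l, p2 (σ.2 l)))
        = (∏ k, p1 (σ.1 k)) * (∏ l, p2 (σ.2 l)) := Real.mul_self_sqrt (hP0 σ)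
    by_cases hex : ∃ k l, 0 < w (σ.1 k) (σ.2 l)
    · rw [ind_true hex]
      calc _ = (Real.sqrt ((∏ k, p1 (σ.1 k)) * (∏ l, p2 (σ.2 l)))
            * Real.sqrt ((∏ k, p1 (σ.1 k)) * (∏ l, p2 (σ.2 l)))) *
            (∑ q : Fin n1 × Fin n2, cvWT p1 p2 w (σ.1 q.1) (σ.2 q.2)) := by ring
        _ = _ := by rw [h1]
    · rw [ind_false hex, hZzero σ hex]
      ring
  have hf2 : ∀ σ : (Fin n1 → V1) × (Fin n2 → V2),
      (Real.sqrt ((∏ k, p1 (σ.1 k)) * (∏ l, p2 (σ.2 l))) * ind (∃ k l, 0 < w (σ.1 k) (σ.2 l)))^2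
      = ((∏ k, p1 (σ.1 k)) * (∏ l, p2 (σ.2 l))) * ind (∃ k l, 0 < w (σ.1 k) (σ.2 l)) := by
    intro σ
    have h1 : Real.sqrt ((∏ k, p1 (σ.1 k)) * (∏ l, p2 (σ.2 l))) ^ 2
        = (∏ k, p1 (σ.1 k)) * (∏ l, p2 (σ.2 l)) := Real.sq_sqrt (hP0 σ)
    rw [mul_pow, h1, pow_two, ind_sq]
  have hg2 : ∀ σ : (Fin n1 → V1) × (Fin n2 → V2),
      (Real.sqrt ((∏ k, p1 (σ.1 k)) * (∏ l, p2 (σ.2 l))) *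
        (∑ q : Fin n1 × Fin n2, cvWT p1 p2 w (σ.1 q.1) (σ.2 q.2)))^2
      = ((∏ k, p1 (σ.1 k)) * (∏ l, p2 (σ.2 l))) *
          ((∑ q : Fin n1 × Fin n2, cvWT p1 p2 w (σ.1 q.1) (σ.2 q.2)) *
           (∑ q : Fin n1 × Fin n2, cvWT p1 p2 w (σ.1 q.1) (σ.2 q.2))) := by
    intro σ
    have h1 : Real.sqrt ((∏ k, p1 (σ.1 k)) * (∏ l, p2 (σ.2 l))) ^ 2
        = (∏ k, p1 (σ.1 k)) * (∏ l, p2 (σ.2 l)) := Real.sq_sqrt (hP0 σ)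
    rw [mul_pow, h1, pow_two]
  simp_rw [hfg, hf2, hg2] at hCS
  rw [hEZ1, hEZ2] at hCS
  -- final algebra
  set ψ : ℝ := ∑ x, ∑ y, w x y with hψdef
  set cv : ℝ := ∑ σ : (Fin n1 → V1) × (Fin n2 → V2),
      ((∏ k, p1 (σ.1 k)) * (∏ l, p2 (σ.2 l))) * ind (∃ k l, 0 < w (σ.1 k) (σ.2 l)) with hcvdef
  have hS11r : 0 ≤ ∑ x, p1 x * (∑ y, p2 y * (cvWT p1 p2 w x y * cvWT p1 p2 w x y)) :=
    Finset.sum_nonneg fun x _ => mul_nonneg (hp1 x)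
      (Finset.sum_nonneg fun y _ => mul_nonneg (hp2 y) (mul_nonneg (hwt0 x y) (hwt0 x y)))
  have hS12r : 0 ≤ ∑ x, p1 x * (cvSY p1 p2 w x * cvSY p1 p2 w x) :=
    Finset.sum_nonneg fun x _ => mul_nonneg (hp1 x) (mul_nonneg (hSY0 x) (hSY0 x))
  have hS21r : 0 ≤ ∑ y, p2 y * (cvSX p1 p2 w y * cvSX p1 p2 w y) :=
    Finset.sum_nonneg fun y _ => mul_nonneg (hp2 y) (mul_nonneg (hSX0 y) (hSX0 y))
  have hub : ((n1:ℝ)*n2) * (∑ x, p1 x * (∑ y, p2 y * (cvWT p1 p2 w x y * cvWT p1 p2 w x y)))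
        + ((n1:ℝ) * ((n2:ℝ)^2 - n2)) * (∑ x, p1 x * (cvSY p1 p2 w x * cvSY p1 p2 w x))
        + (((n1:ℝ)^2 - n1) * n2) * (∑ y, p2 y * (cvSX p1 p2 w y * cvSX p1 p2 w y))
        + (((n1:ℝ)^2 - n1) * ((n2:ℝ)^2 - n2)) * (ψ * ψ)
      ≤ (n1:ℝ)^2 * (n2:ℝ)^2 * (4 * A * ψ) := by
    have h1n : (1:ℝ) ≤ n1 := by exact_mod_cast hn1
    have h2n : (1:ℝ) ≤ n2 := by exact_mod_cast hn2
    have e1 : ((n1:ℝ)*n2) * (∑ x, p1 x * (∑ y, p2 y * (cvWT p1 p2 w x y * cvWT p1 p2 w x y)))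
        ≤ ((n1:ℝ)*n2) * (A * n1 * n2 * ψ) :=
      mul_le_mul_of_nonneg_left hb11 (by positivity)
    have e2 : ((n1:ℝ) * ((n2:ℝ)^2 - n2)) * (∑ x, p1 x * (cvSY p1 p2 w x * cvSY p1 p2 w x))
        ≤ ((n1:ℝ) * (n2:ℝ)^2) * (A * n1 * ψ) := by
      calc ((n1:ℝ) * ((n2:ℝ)^2 - n2)) * (∑ x, p1 x * (cvSY p1 p2 w x * cvSY p1 p2 w x))
          ≤ ((n1:ℝ) * (n2:ℝ)^2) * (∑ x, p1 x * (cvSY p1 p2 w x * cvSY p1 p2 w x)) := by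
            apply mul_le_mul_of_nonneg_right _ hS12r
            nlinarith
        _ ≤ ((n1:ℝ) * (n2:ℝ)^2) * (A * n1 * ψ) :=
            mul_le_mul_of_nonneg_left hb12 (by positivity)
    have e3 : (((n1:ℝ)^2 - n1) * n2) * (∑ y, p2 y * (cvSX p1 p2 w y * cvSX p1 p2 w y))
        ≤ ((n1:ℝ)^2 * n2) * (A * n2 * ψ) := by
      calc (((n1:ℝ)^2 - n1) * n2) * (∑ y, p2 y * (cvSX p1 p2 w y * cvSX p1 p2 w y))
          ≤ ((n1:ℝ)^2 * n2) * (∑ y, p2 y * (cvSX p1 p2 w y * cvSX p1 p2 w y)) := by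
            apply mul_le_mul_of_nonneg_right _ hS21r
            nlinarith
        _ ≤ ((n1:ℝ)^2 * n2) * (A * n2 * ψ) :=
            mul_le_mul_of_nonneg_left hb21 (by positivity)
    have e4 : (((n1:ℝ)^2 - n1) * ((n2:ℝ)^2 - n2)) * (ψ * ψ)
        ≤ ((n1:ℝ)^2 * (n2:ℝ)^2) * (A * ψ) := by
      have hψψ : ψ * ψ ≤ A * ψ := by nlinarith
      have hc1 : (0:ℝ) ≤ ψ * ψ := mul_nonneg hψ0 hψ0
      have hc2 : (((n1:ℝ)^2 - n1) * ((n2:ℝ)^2 - n2)) ≤ (n1:ℝ)^2 * (n2:ℝ)^2 := by nlinarith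
      have a1 : (0:ℝ) ≤ (n1:ℝ)^2 - n1 := by nlinarith [mul_le_mul_of_nonneg_left h1n hn1R.le]
      have a2 : (0:ℝ) ≤ (n2:ℝ)^2 - n2 := by nlinarith [mul_le_mul_of_nonneg_left h2n hn2R.le]
      have hc3 : (0:ℝ) ≤ ((n1:ℝ)^2 - n1) * ((n2:ℝ)^2 - n2) := mul_nonneg a1 a2
      calc (((n1:ℝ)^2 - n1) * ((n2:ℝ)^2 - n2)) * (ψ * ψ)
          ≤ ((n1:ℝ)^2 * (n2:ℝ)^2) * (ψ * ψ) := mul_le_mul_of_nonneg_right hc2 hc1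
        _ ≤ ((n1:ℝ)^2 * (n2:ℝ)^2) * (A * ψ) := mul_le_mul_of_nonneg_left hψψ (by positivity)
    nlinarith [e1, e2, e3, e4]
  have hcv0' : 0 ≤ cv := hcov0
  have hkey : (((n1:ℝ)*n2) * ψ)^2 ≤ cv * ((n1:ℝ)^2 * (n2:ℝ)^2 * (4 * A * ψ)) := by
    calc (((n1:ℝ)*n2) * ψ)^2 ≤ cv * (((n1:ℝ)*n2) * (∑ x, p1 x * (∑ y, p2 y * (cvWT p1 p2 w x y * cvWT p1 p2 w x y)))
        + ((n1:ℝ) * ((n2:ℝ)^2 - n2)) * (∑ x, p1 x * (cvSY p1 p2 w x * cvSY p1 p2 w x))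
        + (((n1:ℝ)^2 - n1) * n2) * (∑ y, p2 y * (cvSX p1 p2 w y * cvSX p1 p2 w y))
        + (((n1:ℝ)^2 - n1) * ((n2:ℝ)^2 - n2)) * (ψ * ψ)) := hCS
      _ ≤ cv * ((n1:ℝ)^2 * (n2:ℝ)^2 * (4 * A * ψ)) := mul_le_mul_of_nonneg_left hub hcv0'
  rw [div_le_iff₀ (by linarith : (0:ℝ) < 4 * A)]
  nlinarith [hkey, mul_pos (mul_pos (pow_pos hn1R 2) (pow_pos hn2R 2)) hψpos,
    sq_nonneg (((n1:ℝ)*n2) * ψ)]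

end Covering
section MDGlue

open Finset

variable {S U0 U1 U2 R0 R1 R2 : Type}
  [Fintype S] [Fintype U0] [Fintype U1] [Fintype U2]
  [Fintype R0] [Fintype R1] [Fintype R2]

lemma ind_congr {P Q : Prop} (h : P ↔ Q) : ind P = ind Q := by
  classical
  by_cases hP : P
  · rw [ind_true hP, ind_true (h.mp hP)]
  · rw [ind_false hP, ind_false (fun hq => hP (h.mpr hq))]

lemma qMD_nonneg (qS : FinPMF S) (qU : S → FinPMF (U0 × U1 × U2))
    (s : S) (u0 : U0) (u1 : U1) (u2 : U2) : 0 ≤ qMD qS qU s u0 u1 u2 :=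
  mul_nonneg (qS.nonneg s) ((qU s).nonneg _)

lemma sum_qMD (qS : FinPMF S) (qU : S → FinPMF (U0 × U1 × U2)) (s : S) :
    ∑ u0, ∑ u1, ∑ u2, qMD qS qU s u0 u1 u2 = qS.p s := by
  have h1 : ∑ u : U0 × U1 × U2, (qU s).p u = 1 := (qU s).sum_eq_one
  rw [Fintype.sum_prod_type] at h1
  simp_rw [Fintype.sum_prod_type] at h1
  unfold qMD
  simp_rw [← Finset.mul_sum]
  rw [h1, mul_one]

lemma mSU0_nonneg (qS : FinPMF S) (qU : S → FinPMF (U0 × U1 × U2)) (s : S) (u0 : U0) :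
    0 ≤ mSU0 qS qU s u0 :=
  Finset.sum_nonneg fun u1 _ => Finset.sum_nonneg fun u2 _ => qMD_nonneg qS qU s u0 u1 u2

lemma mU0_nonneg (qS : FinPMF S) (qU : S → FinPMF (U0 × U1 × U2)) (u0 : U0) :
    0 ≤ mU0 qS qU u0 := Finset.sum_nonneg fun s _ => mSU0_nonneg qS qU s u0

lemma mSU01_nonneg (qS : FinPMF S) (qU : S → FinPMF (U0 × U1 × U2)) (s : S) (u0 : U0) (u1 : U1) :
    0 ≤ mSU01 qS qU s u0 u1 :=
  Finset.sum_nonneg fun u2 _ => qMD_nonneg qS qU s u0 u1 u2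

lemma mU01_nonneg (qS : FinPMF S) (qU : S → FinPMF (U0 × U1 × U2)) (u0 : U0) (u1 : U1) :
    0 ≤ mU01 qS qU u0 u1 := Finset.sum_nonneg fun s _ => mSU01_nonneg qS qU s u0 u1

lemma mSU02_nonneg (qS : FinPMF S) (qU : S → FinPMF (U0 × U1 × U2)) (s : S) (u0 : U0) (u2 : U2) :
    0 ≤ mSU02 qS qU s u0 u2 :=
  Finset.sum_nonneg fun u1 _ => qMD_nonneg qS qU s u0 u1 u2

lemma mU02_nonneg (qS : FinPMF S) (qU : S → FinPMF (U0 × U1 × U2)) (u0 : U0) (u2 : U2) :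
    0 ≤ mU02 qS qU u0 u2 := Finset.sum_nonneg fun s _ => mSU02_nonneg qS qU s u0 u2

lemma sum_mU0 (qS : FinPMF S) (qU : S → FinPMF (U0 × U1 × U2)) :
    ∑ u0, mU0 qS qU u0 = 1 := by
  unfold mU0
  rw [Finset.sum_comm]
  have h : ∀ s : S, ∑ u0, mSU0 qS qU s u0 = qS.p s := by
    intro s
    unfold mSU0
    exact sum_qMD qS qU s
  simp_rw [h]
  exact qS.sum_eq_one

lemma sum_mU01 (qS : FinPMF S) (qU : S → FinPMF (U0 × U1 × U2)) (u0 : U0) :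
    ∑ u1, mU01 qS qU u0 u1 = mU0 qS qU u0 := by
  unfold mU01 mU0 mSU01 mSU0
  rw [Finset.sum_comm]

lemma sum_mU02 (qS : FinPMF S) (qU : S → FinPMF (U0 × U1 × U2)) (u0 : U0) :
    ∑ u2, mU02 qS qU u0 u2 = mU0 qS qU u0 := by
  unfold mU02 mU0 mSU02 mSU0
  rw [Finset.sum_comm]
  refine Finset.sum_congr rfl fun s _ => ?_
  rw [Finset.sum_comm]

open Classical in
/-- conditional pmf of U1 given U0 (from the joint marginal), uniform fallback. -/
noncomputable def pcU1 (qS : FinPMF S) (qU : S → FinPMF (U0 × U1 × U2)) (v : U0) (x : U1) : ℝ :=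
  if mU0 qS qU v = 0 then (Fintype.card U1 : ℝ)⁻¹ else mU01 qS qU v x / mU0 qS qU v

open Classical in
noncomputable def pcU2 (qS : FinPMF S) (qU : S → FinPMF (U0 × U1 × U2)) (v : U0) (y : U2) : ℝ :=
  if mU0 qS qU v = 0 then (Fintype.card U2 : ℝ)⁻¹ else mU02 qS qU v y / mU0 qS qU v

lemma pcU1_nonneg (qS : FinPMF S) (qU : S → FinPMF (U0 × U1 × U2)) (v : U0) (x : U1) :
    0 ≤ pcU1 qS qU v x := by
  unfold pcU1
  split
  · positivity
  · exact div_nonneg (mU01_nonneg qS qU v x)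
      (le_of_lt (lt_of_le_of_ne (mU0_nonneg qS qU v) (Ne.symm (by assumption))))

lemma pcU2_nonneg (qS : FinPMF S) (qU : S → FinPMF (U0 × U1 × U2)) (v : U0) (y : U2) :
    0 ≤ pcU2 qS qU v y := by
  unfold pcU2
  split
  · positivity
  · exact div_nonneg (mU02_nonneg qS qU v y)
      (le_of_lt (lt_of_le_of_ne (mU0_nonneg qS qU v) (Ne.symm (by assumption))))

lemma pcU1_sum [Nonempty U1] (qS : FinPMF S) (qU : S → FinPMF (U0 × U1 × U2)) (v : U0) :
    ∑ x, pcU1 qS qU v x = 1 := by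
  unfold pcU1
  by_cases h : mU0 qS qU v = 0
  · simp only [h, if_true]
    rw [Finset.sum_const, Finset.card_univ, nsmul_eq_mul]
    rw [mul_inv_cancel₀]
    exact Nat.cast_ne_zero.mpr Fintype.card_ne_zero
  · simp only [h, if_false]
    rw [← Finset.sum_div, sum_mU01, div_self h]

lemma pcU2_sum [Nonempty U2] (qS : FinPMF S) (qU : S → FinPMF (U0 × U1 × U2)) (v : U0) :
    ∑ y, pcU2 qS qU v y = 1 := by
  unfold pcU2
  by_cases h : mU0 qS qU v = 0
  · simp only [h, if_true]
    rw [Finset.sum_const, Finset.card_univ, nsmul_eq_mul]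
    rw [mul_inv_cancel₀]
    exact Nat.cast_ne_zero.mpr Fintype.card_ne_zero
  · simp only [h, if_false]
    rw [← Finset.sum_div, sum_mU02, div_self h]

/-- the "bad event" of the theorem -/
def EventP (qS : FinPMF S) (qU : S → FinPMF (U0 × U1 × U2))
    (d0 : S → R0 → ℝ) (d1 : S → R1 → ℝ) (d2 : S → R2 → ℝ) (D0 D1 D2 : ℝ)
    (g0 : U0 → U1 → U2 → R0) (g1 : U0 → U1 → R1) (g2 : U0 → U2 → R2)
    (M1 M2 J0 : ℕ) (γ : ℝ) (s : S) (u0 : U0) (u1 : U1) (u2 : U2) : Prop :=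
  D0 < d0 s (g0 u0 u1 u2) ∨ D1 < d1 s (g1 u0 u1) ∨
  D2 < d2 s (g2 u0 u2) ∨
  Real.logb 2 (J0 : ℝ) - iSU0 qS qU s u0 < γ ∨
  Real.logb 2 (M1 : ℝ) - iSU01 qS qU s u0 u1 < γ ∨
  Real.logb 2 (M2 : ℝ) - iSU02 qS qU s u0 u2 < γ ∨
  Real.logb 2 ((M1 : ℝ) * (M2 : ℝ) / (J0 : ℝ)) -
    iSU012 qS qU s u0 u1 u2 - iU1U2cU0 qS qU u0 u1 u2 < γ

/-- good atoms: positive probability and no bad event -/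
def GoodP (qS : FinPMF S) (qU : S → FinPMF (U0 × U1 × U2))
    (d0 : S → R0 → ℝ) (d1 : S → R1 → ℝ) (d2 : S → R2 → ℝ) (D0 D1 D2 : ℝ)
    (g0 : U0 → U1 → U2 → R0) (g1 : U0 → U1 → R1) (g2 : U0 → U2 → R2)
    (M1 M2 J0 : ℕ) (γ : ℝ) (s : S) (u0 : U0) (u1 : U1) (u2 : U2) : Prop :=
  0 < qMD qS qU s u0 u1 u2 ∧
    ¬ EventP qS qU d0 d1 d2 D0 D1 D2 g0 g1 g2 M1 M2 J0 γ s u0 u1 u2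

/-- weight of good atoms -/
noncomputable def WF (qS : FinPMF S) (qU : S → FinPMF (U0 × U1 × U2))
    (d0 : S → R0 → ℝ) (d1 : S → R1 → ℝ) (d2 : S → R2 → ℝ) (D0 D1 D2 : ℝ)
    (g0 : U0 → U1 → U2 → R0) (g1 : U0 → U1 → R1) (g2 : U0 → U2 → R2)
    (M1 M2 J0 : ℕ) (γ : ℝ) (s : S) (u0 : U0) (u1 : U1) (u2 : U2) : ℝ :=
  qMD qS qU s u0 u1 u2 *
    ind (GoodP qS qU d0 d1 d2 D0 D1 D2 g0 g1 g2 M1 M2 J0 γ s u0 u1 u2)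

lemma WF_nonneg (qS : FinPMF S) (qU : S → FinPMF (U0 × U1 × U2))
    (d0 : S → R0 → ℝ) (d1 : S → R1 → ℝ) (d2 : S → R2 → ℝ) (D0 D1 D2 : ℝ)
    (g0 : U0 → U1 → U2 → R0) (g1 : U0 → U1 → R1) (g2 : U0 → U2 → R2)
    (M1 M2 J0 : ℕ) (γ : ℝ) (s : S) (u0 : U0) (u1 : U1) (u2 : U2) :
    0 ≤ WF qS qU d0 d1 d2 D0 D1 D2 g0 g1 g2 M1 M2 J0 γ s u0 u1 u2 :=
  mul_nonneg (qMD_nonneg qS qU s u0 u1 u2) (ind_nonneg _)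

lemma WF_le_qMD (qS : FinPMF S) (qU : S → FinPMF (U0 × U1 × U2))
    (d0 : S → R0 → ℝ) (d1 : S → R1 → ℝ) (d2 : S → R2 → ℝ) (D0 D1 D2 : ℝ)
    (g0 : U0 → U1 → U2 → R0) (g1 : U0 → U1 → R1) (g2 : U0 → U2 → R2)
    (M1 M2 J0 : ℕ) (γ : ℝ) (s : S) (u0 : U0) (u1 : U1) (u2 : U2) :
    WF qS qU d0 d1 d2 D0 D1 D2 g0 g1 g2 M1 M2 J0 γ s u0 u1 u2 ≤ qMD qS qU s u0 u1 u2 := by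
  unfold WF
  calc qMD qS qU s u0 u1 u2 * ind _ ≤ qMD qS qU s u0 u1 u2 * 1 :=
        mul_le_mul_of_nonneg_left (ind_le_one _) (qMD_nonneg qS qU s u0 u1 u2)
    _ = _ := mul_one _

lemma WF_pos_good {qS : FinPMF S} {qU : S → FinPMF (U0 × U1 × U2)}
    {d0 : S → R0 → ℝ} {d1 : S → R1 → ℝ} {d2 : S → R2 → ℝ} {D0 D1 D2 : ℝ}
    {g0 : U0 → U1 → U2 → R0} {g1 : U0 → U1 → R1} {g2 : U0 → U2 → R2}
    {M1 M2 J0 : ℕ} {γ : ℝ} {s : S} {u0 : U0} {u1 : U1} {u2 : U2}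
    (h : 0 < WF qS qU d0 d1 d2 D0 D1 D2 g0 g1 g2 M1 M2 J0 γ s u0 u1 u2) :
    GoodP qS qU d0 d1 d2 D0 D1 D2 g0 g1 g2 M1 M2 J0 γ s u0 u1 u2 := by
  by_contra hc
  rw [WF, ind_false hc, mul_zero] at h
  exact lt_irrefl 0 h

lemma good_WF_eq {qS : FinPMF S} {qU : S → FinPMF (U0 × U1 × U2)}
    {d0 : S → R0 → ℝ} {d1 : S → R1 → ℝ} {d2 : S → R2 → ℝ} {D0 D1 D2 : ℝ}
    {g0 : U0 → U1 → U2 → R0} {g1 : U0 → U1 → R1} {g2 : U0 → U2 → R2}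
    {M1 M2 J0 : ℕ} {γ : ℝ} {s : S} {u0 : U0} {u1 : U1} {u2 : U2}
    (h : GoodP qS qU d0 d1 d2 D0 D1 D2 g0 g1 g2 M1 M2 J0 γ s u0 u1 u2) :
    WF qS qU d0 d1 d2 D0 D1 D2 g0 g1 g2 M1 M2 J0 γ s u0 u1 u2 = qMD qS qU s u0 u1 u2 := by
  rw [WF, ind_true h, mul_one]

lemma logb_cond {r c γ : ℝ} (hr : 0 < r) (hc : 0 < c)
    (h : Real.logb 2 r ≤ Real.logb 2 c - γ) : r ≤ c * (2:ℝ)^(-γ) := by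
  have h2 : r = (2:ℝ) ^ Real.logb 2 r :=
    (Real.rpow_logb (by norm_num) (by norm_num) hr).symm
  have h3 : (2:ℝ) ^ (Real.logb 2 c - γ) = c * (2:ℝ)^(-γ) := by
    rw [sub_eq_add_neg, Real.rpow_add (by norm_num),
      Real.rpow_logb (by norm_num) (by norm_num) hc]
  rw [h2, ← h3]
  exact Real.rpow_le_rpow_of_exponent_le (by norm_num) h

/-- positivity of all marginals at a positive atom -/
lemma atom_pos {qS : FinPMF S} {qU : S → FinPMF (U0 × U1 × U2)}
    {s : S} {u0 : U0} {u1 : U1} {u2 : U2} (h : 0 < qMD qS qU s u0 u1 u2) :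
    0 < qS.p s ∧ 0 < mSU0 qS qU s u0 ∧ 0 < mU0 qS qU u0 ∧
    0 < mSU01 qS qU s u0 u1 ∧ 0 < mU01 qS qU u0 u1 ∧
    0 < mSU02 qS qU s u0 u2 ∧ 0 < mU02 qS qU u0 u2 ∧ 0 < mU012 qS qU u0 u1 u2 := by
  have hqs : 0 < qS.p s := by
    rcases mul_pos_iff.mp h with ⟨h1, _⟩ | ⟨_, h2⟩
    · exact h1
    · exact absurd ((qU s).nonneg (u0, u1, u2)) (not_le.mpr h2)
  have hmSU01 : 0 < mSU01 qS qU s u0 u1 := by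
    unfold mSU01
    exact lt_of_lt_of_le h (Finset.single_le_sum
      (fun u2' _ => qMD_nonneg qS qU s u0 u1 u2') (mem_univ u2))
  have hmSU0 : 0 < mSU0 qS qU s u0 := by
    unfold mSU0
    refine lt_of_lt_of_le hmSU01 ?_
    exact Finset.single_le_sum (fun u1' _ => mSU01_nonneg qS qU s u0 u1') (mem_univ u1)
  have hmSU02 : 0 < mSU02 qS qU s u0 u2 := by
    unfold mSU02
    exact lt_of_lt_of_le h (Finset.single_le_sum
      (fun u1' _ => qMD_nonneg qS qU s u0 u1' u2) (mem_univ u1))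
  refine ⟨hqs, hmSU0, ?_, hmSU01, ?_, hmSU02, ?_, ?_⟩
  · exact lt_of_lt_of_le hmSU0 (Finset.single_le_sum
      (fun s' _ => mSU0_nonneg qS qU s' u0) (mem_univ s))
  · exact lt_of_lt_of_le hmSU01 (Finset.single_le_sum
      (fun s' _ => mSU01_nonneg qS qU s' u0 u1) (mem_univ s))
  · exact lt_of_lt_of_le hmSU02 (Finset.single_le_sum
      (fun s' _ => mSU02_nonneg qS qU s' u0 u2) (mem_univ s))
  · unfold mU012
    exact lt_of_lt_of_le h (Finset.single_le_sum
      (fun s' _ => qMD_nonneg qS qU s' u0 u1 u2) (mem_univ s))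

end MDGlue
section MDConds

open Finset

variable {S U0 U1 U2 R0 R1 R2 : Type}
  [Fintype S] [Fintype U0] [Fintype U1] [Fintype U2]
  [Fintype R0] [Fintype R1] [Fintype R2]
  {qS : FinPMF S} {qU : S → FinPMF (U0 × U1 × U2)}
  {d0 : S → R0 → ℝ} {d1 : S → R1 → ℝ} {d2 : S → R2 → ℝ} {D0 D1 D2 : ℝ}
  {g0 : U0 → U1 → U2 → R0} {g1 : U0 → U1 → R1} {g2 : U0 → U2 → R2}
  {M1 M2 J0 : ℕ} {γ : ℝ} {s : S} {u0 : U0} {u1 : U1} {u2 : U2}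

lemma good_cond1 (hJ0 : 0 < J0)
    (h : GoodP qS qU d0 d1 d2 D0 D1 D2 g0 g1 g2 M1 M2 J0 γ s u0 u1 u2) :
    mSU0 qS qU s u0 ≤ qS.p s * mU0 qS qU u0 * ((J0:ℝ) * (2:ℝ)^(-γ)) := by
  obtain ⟨hq, hne⟩ := h
  rw [EventP] at hne
  push_neg at hne
  obtain ⟨-, -, -, h4, -, -, -⟩ := hne
  obtain ⟨hqs, hmSU0, hmU0, -, -, -, -, -⟩ := atom_pos hq
  have hr : 0 < mSU0 qS qU s u0 / (qS.p s * mU0 qS qU u0) :=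
    div_pos hmSU0 (mul_pos hqs hmU0)
  have hc : (0:ℝ) < (J0:ℝ) := by exact_mod_cast hJ0
  have h5 : Real.logb 2 (mSU0 qS qU s u0 / (qS.p s * mU0 qS qU u0))
      ≤ Real.logb 2 (J0:ℝ) - γ := by
    unfold iSU0 at h4; linarith
  have h6 := logb_cond hr hc h5
  rw [div_le_iff₀ (mul_pos hqs hmU0)] at h6
  calc mSU0 qS qU s u0 ≤ (J0:ℝ) * (2:ℝ)^(-γ) * (qS.p s * mU0 qS qU u0) := h6
    _ = qS.p s * mU0 qS qU u0 * ((J0:ℝ) * (2:ℝ)^(-γ)) := by ring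

lemma good_cond2 (hM1 : 0 < M1)
    (h : GoodP qS qU d0 d1 d2 D0 D1 D2 g0 g1 g2 M1 M2 J0 γ s u0 u1 u2) :
    mSU01 qS qU s u0 u1 ≤ qS.p s * mU01 qS qU u0 u1 * ((M1:ℝ) * (2:ℝ)^(-γ)) := by
  obtain ⟨hq, hne⟩ := h
  rw [EventP] at hne
  push_neg at hne
  obtain ⟨-, -, -, -, h5, -, -⟩ := hne
  obtain ⟨hqs, -, -, hmSU01, hmU01, -, -, -⟩ := atom_pos hq
  have hr : 0 < mSU01 qS qU s u0 u1 / (qS.p s * mU01 qS qU u0 u1) :=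
    div_pos hmSU01 (mul_pos hqs hmU01)
  have hc : (0:ℝ) < (M1:ℝ) := by exact_mod_cast hM1
  have h5' : Real.logb 2 (mSU01 qS qU s u0 u1 / (qS.p s * mU01 qS qU u0 u1))
      ≤ Real.logb 2 (M1:ℝ) - γ := by
    unfold iSU01 at h5; linarith
  have h6 := logb_cond hr hc h5'
  rw [div_le_iff₀ (mul_pos hqs hmU01)] at h6
  calc mSU01 qS qU s u0 u1 ≤ (M1:ℝ) * (2:ℝ)^(-γ) * (qS.p s * mU01 qS qU u0 u1) := h6
    _ = qS.p s * mU01 qS qU u0 u1 * ((M1:ℝ) * (2:ℝ)^(-γ)) := by ring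

lemma good_cond3 (hM2 : 0 < M2)
    (h : GoodP qS qU d0 d1 d2 D0 D1 D2 g0 g1 g2 M1 M2 J0 γ s u0 u1 u2) :
    mSU02 qS qU s u0 u2 ≤ qS.p s * mU02 qS qU u0 u2 * ((M2:ℝ) * (2:ℝ)^(-γ)) := by
  obtain ⟨hq, hne⟩ := h
  rw [EventP] at hne
  push_neg at hne
  obtain ⟨-, -, -, -, -, h6, -⟩ := hne
  obtain ⟨hqs, -, -, -, -, hmSU02, hmU02, -⟩ := atom_pos hq
  have hr : 0 < mSU02 qS qU s u0 u2 / (qS.p s * mU02 qS qU u0 u2) :=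
    div_pos hmSU02 (mul_pos hqs hmU02)
  have hc : (0:ℝ) < (M2:ℝ) := by exact_mod_cast hM2
  have h5' : Real.logb 2 (mSU02 qS qU s u0 u2 / (qS.p s * mU02 qS qU u0 u2))
      ≤ Real.logb 2 (M2:ℝ) - γ := by
    unfold iSU02 at h6; linarith
  have h7 := logb_cond hr hc h5'
  rw [div_le_iff₀ (mul_pos hqs hmU02)] at h7
  calc mSU02 qS qU s u0 u2 ≤ (M2:ℝ) * (2:ℝ)^(-γ) * (qS.p s * mU02 qS qU u0 u2) := h7
    _ = qS.p s * mU02 qS qU u0 u2 * ((M2:ℝ) * (2:ℝ)^(-γ)) := by ring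

lemma good_cond4 (hJ0 : 0 < J0) (hM1 : 0 < M1) (hM2 : 0 < M2)
    (h : GoodP qS qU d0 d1 d2 D0 D1 D2 g0 g1 g2 M1 M2 J0 γ s u0 u1 u2) :
    qMD qS qU s u0 u1 u2 * mU0 qS qU u0
      ≤ qS.p s * (mU01 qS qU u0 u1 * mU02 qS qU u0 u2) *
          (((M1:ℝ) * (M2:ℝ) / (J0:ℝ)) * (2:ℝ)^(-γ)) := by
  obtain ⟨hq, hne⟩ := h
  rw [EventP] at hne
  push_neg at hne
  obtain ⟨-, -, -, -, -, -, h7⟩ := hne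
  obtain ⟨hqs, -, hmU0, -, hmU01, -, hmU02, hmU012⟩ := atom_pos hq
  have hA : (0:ℝ) < qMD qS qU s u0 u1 u2 / (qS.p s * mU012 qS qU u0 u1 u2) :=
    div_pos hq (mul_pos hqs hmU012)
  have hB : (0:ℝ) < mU012 qS qU u0 u1 u2 * mU0 qS qU u0 /
      (mU01 qS qU u0 u1 * mU02 qS qU u0 u2) :=
    div_pos (mul_pos hmU012 hmU0) (mul_pos hmU01 hmU02)
  have hsum : iSU012 qS qU s u0 u1 u2 + iU1U2cU0 qS qU u0 u1 u2
      = Real.logb 2 ((qMD qS qU s u0 u1 u2 / (qS.p s * mU012 qS qU u0 u1 u2)) *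
          (mU012 qS qU u0 u1 u2 * mU0 qS qU u0 /
            (mU01 qS qU u0 u1 * mU02 qS qU u0 u2))) := by
    unfold iSU012 iU1U2cU0
    rw [Real.logb_mul (ne_of_gt hA) (ne_of_gt hB)]
  have hprod : (qMD qS qU s u0 u1 u2 / (qS.p s * mU012 qS qU u0 u1 u2)) *
      (mU012 qS qU u0 u1 u2 * mU0 qS qU u0 / (mU01 qS qU u0 u1 * mU02 qS qU u0 u2))
      = qMD qS qU s u0 u1 u2 * mU0 qS qU u0 /
          (qS.p s * (mU01 qS qU u0 u1 * mU02 qS qU u0 u2)) := by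
    field_simp
  have hc : (0:ℝ) < (M1:ℝ) * (M2:ℝ) / (J0:ℝ) := by
    have c1 : (0:ℝ) < (M1:ℝ) := by exact_mod_cast hM1
    have c2 : (0:ℝ) < (M2:ℝ) := by exact_mod_cast hM2
    have c3 : (0:ℝ) < (J0:ℝ) := by exact_mod_cast hJ0
    exact div_pos (mul_pos c1 c2) c3
  have hr : 0 < qMD qS qU s u0 u1 u2 * mU0 qS qU u0 /
      (qS.p s * (mU01 qS qU u0 u1 * mU02 qS qU u0 u2)) :=
    div_pos (mul_pos hq hmU0) (mul_pos hqs (mul_pos hmU01 hmU02))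
  have h8 : iSU012 qS qU s u0 u1 u2 + iU1U2cU0 qS qU u0 u1 u2
      ≤ Real.logb 2 ((M1:ℝ) * (M2:ℝ) / (J0:ℝ)) - γ := by linarith
  rw [hsum, hprod] at h8
  have h9 := logb_cond hr hc h8
  rw [div_le_iff₀ (mul_pos hqs (mul_pos hmU01 hmU02))] at h9
  calc qMD qS qU s u0 u1 u2 * mU0 qS qU u0
      ≤ (M1:ℝ) * (M2:ℝ) / (J0:ℝ) * (2:ℝ)^(-γ) *
          (qS.p s * (mU01 qS qU u0 u1 * mU02 qS qU u0 u2)) := h9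
    _ = qS.p s * (mU01 qS qU u0 u1 * mU02 qS qU u0 u2) *
          (((M1:ℝ) * (M2:ℝ) / (J0:ℝ)) * (2:ℝ)^(-γ)) := by ring

end MDConds
section Layered

open Finset

set_option maxHeartbeats 4000000 in
/-- three-layer covering bound with rate transfer -/
lemma layered_bound {U0 U1 U2 : Type} [Fintype U0] [Fintype U1] [Fintype U2]
    {J0 N1 N2 : ℕ} (hJ0 : 0 < J0) (hN1 : 0 < N1) (hN2 : 0 < N2)
    (p0 : U0 → ℝ) (p1 : U0 → U1 → ℝ) (p2 : U0 → U2 → ℝ)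
    (hp0 : ∀ v, 0 ≤ p0 v) (hp0s : ∑ v, p0 v = 1)
    (hp1 : ∀ v x, 0 ≤ p1 v x) (hp1s : ∀ v, ∑ x, p1 v x = 1)
    (hp2 : ∀ v y, 0 ≤ p2 v y) (hp2s : ∀ v, ∑ y, p2 v y = 1)
    (W : U0 → U1 → U2 → ℝ) (hW : ∀ v x y, 0 ≤ W v x y)
    {Q tg : ℝ} (hQ : 0 < Q) (htg : 0 < tg)
    (hWQ : ∑ v, ∑ x, ∑ y, W v x y ≤ Q)
    (hpair : ∀ v x y, 0 < W v x y →
      W v x y ≤ (Q * p0 v * ((J0:ℝ) * tg)) * N1 * N2 * (p1 v x * p2 v y))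
    (hrow : ∀ v x, 0 < ∑ y, W v x y →
      ∑ y, W v x y ≤ (Q * p0 v * ((J0:ℝ) * tg)) * N1 * p1 v x)
    (hcol : ∀ v y, 0 < ∑ x, W v x y →
      ∑ x, W v x y ≤ (Q * p0 v * ((J0:ℝ) * tg)) * N2 * p2 v y)
    (htot : ∀ v, 0 < ∑ x, ∑ y, W v x y →
      ∑ x, ∑ y, W v x y ≤ Q * p0 v * ((J0:ℝ) * tg))
    (hp0pos : ∀ v, 0 < ∑ x, ∑ y, W v x y → 0 < p0 v) :
    Q * (∑ ω : Fin J0 → U0 × (Fin N1 → U1) × (Fin N2 → U2),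
      (∏ i, p0 (ω i).1 * ((∏ k, p1 (ω i).1 ((ω i).2.1 k)) *
        (∏ l, p2 (ω i).1 ((ω i).2.2 l)))) *
        ind (∀ (i : Fin J0) (k : Fin N1) (l : Fin N2),
          ¬ (0 < W ((ω i).1) ((ω i).2.1 k) ((ω i).2.2 l))))
    ≤ Q - (∑ v, ∑ x, ∑ y, W v x y) + Q * (4 * tg) := by
  classical
  have hJ0R : (0:ℝ) < (J0:ℝ) := by exact_mod_cast hJ0
  have hψnn : ∀ v, 0 ≤ ∑ x, ∑ y, W v x y := fun v =>
    Finset.sum_nonneg fun x _ => Finset.sum_nonneg fun y _ => hW v x y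
  have hWtotnn : 0 ≤ ∑ v, ∑ x, ∑ y, W v x y := Finset.sum_nonneg fun v _ => hψnn v
  -- block weight sums to one
  have hPBnn : ∀ b : U0 × (Fin N1 → U1) × (Fin N2 → U2),
      0 ≤ p0 b.1 * ((∏ k, p1 b.1 (b.2.1 k)) * (∏ l, p2 b.1 (b.2.2 l))) := fun b =>
    mul_nonneg (hp0 b.1) (mul_nonneg (Finset.prod_nonneg fun k _ => hp1 _ _)
      (Finset.prod_nonneg fun l _ => hp2 _ _))
  have hPBsum : ∑ b : U0 × (Fin N1 → U1) × (Fin N2 → U2),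
      p0 b.1 * ((∏ k, p1 b.1 (b.2.1 k)) * (∏ l, p2 b.1 (b.2.2 l))) = 1 := by
    rw [Fintype.sum_prod_type]
    have h : ∀ v : U0, ∑ σ : (Fin N1 → U1) × (Fin N2 → U2),
        p0 v * ((∏ k, p1 v (σ.1 k)) * (∏ l, p2 v (σ.2 l))) = p0 v := by
      intro v
      rw [← Finset.mul_sum]
      have h2 : ∑ σ : (Fin N1 → U1) × (Fin N2 → U2),
          (∏ k, p1 v (σ.1 k)) * (∏ l, p2 v (σ.2 l)) = 1 := by
        rw [Fintype.sum_prod_type]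
        have h3 : ∀ xs : Fin N1 → U1,
            ∑ ys : Fin N2 → U2, (∏ k, p1 v (xs k)) * (∏ l, p2 v (ys l))
            = (∏ k, p1 v (xs k)) := by
          intro xs
          rw [← Finset.mul_sum, sum_pi_prod (fun _ y => p2 v y)]
          simp [hp2s v]
        simp_rw [h3]
        rw [sum_pi_prod (fun _ x => p1 v x)]
        simp [hp1s v]
      rw [h2, mul_one]
    simp_rw [h]
    exact hp0s
  -- step 1 : factorization over the J0 blocks
  have hstep1 : (∑ ω : Fin J0 → U0 × (Fin N1 → U1) × (Fin N2 → U2),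
      (∏ i, p0 (ω i).1 * ((∏ k, p1 (ω i).1 ((ω i).2.1 k)) *
        (∏ l, p2 (ω i).1 ((ω i).2.2 l)))) *
        ind (∀ (i : Fin J0) (k : Fin N1) (l : Fin N2),
          ¬ (0 < W ((ω i).1) ((ω i).2.1 k) ((ω i).2.2 l))))
      = (∑ b : U0 × (Fin N1 → U1) × (Fin N2 → U2),
          p0 b.1 * ((∏ k, p1 b.1 (b.2.1 k)) * (∏ l, p2 b.1 (b.2.2 l))) *
            ind (∀ (k : Fin N1) (l : Fin N2), ¬ (0 < W b.1 (b.2.1 k) (b.2.2 l)))) ^ J0 := by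
    have h1 : ∀ ω : Fin J0 → U0 × (Fin N1 → U1) × (Fin N2 → U2),
        ind (∀ (i : Fin J0) (k : Fin N1) (l : Fin N2),
          ¬ (0 < W ((ω i).1) ((ω i).2.1 k) ((ω i).2.2 l)))
        = ∏ i, ind (∀ (k : Fin N1) (l : Fin N2),
            ¬ (0 < W ((ω i).1) ((ω i).2.1 k) ((ω i).2.2 l))) := fun ω =>
      ind_forall_prod (fun i => ∀ (k : Fin N1) (l : Fin N2),
        ¬ (0 < W ((ω i).1) ((ω i).2.1 k) ((ω i).2.2 l)))
    simp_rw [h1, ← Finset.prod_mul_distrib]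
    rw [sum_pi_prod (fun (_ : Fin J0) (b : U0 × (Fin N1 → U1) × (Fin N2 → U2)) =>
      p0 b.1 * ((∏ k, p1 b.1 (b.2.1 k)) * (∏ l, p2 b.1 (b.2.2 l))) *
        ind (∀ (k : Fin N1) (l : Fin N2), ¬ (0 < W b.1 (b.2.1 k) (b.2.2 l))))]
    rw [Finset.prod_const, Finset.card_univ, Fintype.card_fin]
  -- step 2 : express via the covered probability φ
  have hstep2 : (∑ b : U0 × (Fin N1 → U1) × (Fin N2 → U2),
      p0 b.1 * ((∏ k, p1 b.1 (b.2.1 k)) * (∏ l, p2 b.1 (b.2.2 l))) *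
        ind (∀ (k : Fin N1) (l : Fin N2), ¬ (0 < W b.1 (b.2.1 k) (b.2.2 l))))
      = 1 - ∑ b : U0 × (Fin N1 → U1) × (Fin N2 → U2),
          p0 b.1 * ((∏ k, p1 b.1 (b.2.1 k)) * (∏ l, p2 b.1 (b.2.2 l))) *
            ind (∃ (k : Fin N1) (l : Fin N2), 0 < W b.1 (b.2.1 k) (b.2.2 l)) := by
    have h1 : ∀ b : U0 × (Fin N1 → U1) × (Fin N2 → U2),
        ind (∀ (k : Fin N1) (l : Fin N2), ¬ (0 < W b.1 (b.2.1 k) (b.2.2 l)))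
        = 1 - ind (∃ (k : Fin N1) (l : Fin N2), 0 < W b.1 (b.2.1 k) (b.2.2 l)) := by
      intro b
      rw [ind_one_sub_not]
      congr 1
      apply ind_congr
      constructor
      · intro h; push_neg at h; exact h
      · intro h; push_neg; exact h
    simp_rw [h1, mul_sub, mul_one, Finset.sum_sub_distrib, hPBsum]
  -- the covered probability, φ
  have hφnn : 0 ≤ ∑ b : U0 × (Fin N1 → U1) × (Fin N2 → U2),
      p0 b.1 * ((∏ k, p1 b.1 (b.2.1 k)) * (∏ l, p2 b.1 (b.2.2 l))) *
        ind (∃ (k : Fin N1) (l : Fin N2), 0 < W b.1 (b.2.1 k) (b.2.2 l)) :=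
    Finset.sum_nonneg fun b _ => mul_nonneg (hPBnn b) (ind_nonneg _)
  have hφle1 : ∑ b : U0 × (Fin N1 → U1) × (Fin N2 → U2),
      p0 b.1 * ((∏ k, p1 b.1 (b.2.1 k)) * (∏ l, p2 b.1 (b.2.2 l))) *
        ind (∃ (k : Fin N1) (l : Fin N2), 0 < W b.1 (b.2.1 k) (b.2.2 l)) ≤ 1 := by
    rw [← hPBsum]
    refine Finset.sum_le_sum fun b _ => ?_
    calc p0 b.1 * ((∏ k, p1 b.1 (b.2.1 k)) * (∏ l, p2 b.1 (b.2.2 l))) * ind _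
        ≤ p0 b.1 * ((∏ k, p1 b.1 (b.2.1 k)) * (∏ l, p2 b.1 (b.2.2 l))) * 1 :=
          mul_le_mul_of_nonneg_left (ind_le_one _) (hPBnn b)
      _ = _ := mul_one _
  -- step 3 : lower bound on φ
  have hstep3 : ∑ v, ∑ x, ∑ y, W v x y
      ≤ (4 * Q * (J0:ℝ) * tg) *
        ∑ b : U0 × (Fin N1 → U1) × (Fin N2 → U2),
          p0 b.1 * ((∏ k, p1 b.1 (b.2.1 k)) * (∏ l, p2 b.1 (b.2.2 l))) *
            ind (∃ (k : Fin N1) (l : Fin N2), 0 < W b.1 (b.2.1 k) (b.2.2 l)) := by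
    have hφsplit : ∑ b : U0 × (Fin N1 → U1) × (Fin N2 → U2),
        p0 b.1 * ((∏ k, p1 b.1 (b.2.1 k)) * (∏ l, p2 b.1 (b.2.2 l))) *
          ind (∃ (k : Fin N1) (l : Fin N2), 0 < W b.1 (b.2.1 k) (b.2.2 l))
        = ∑ v, p0 v * ∑ σ : (Fin N1 → U1) × (Fin N2 → U2),
            ((∏ k, p1 v (σ.1 k)) * (∏ l, p2 v (σ.2 l))) *
              ind (∃ (k : Fin N1) (l : Fin N2), 0 < W v (σ.1 k) (σ.2 l)) := by
      rw [Fintype.sum_prod_type]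
      refine Finset.sum_congr rfl fun v _ => ?_
      rw [Finset.mul_sum]
      refine Finset.sum_congr rfl fun σ _ => ?_
      ring
    rw [hφsplit]
    have hperv : ∀ v : U0, ∑ x, ∑ y, W v x y
        ≤ (4 * Q * (J0:ℝ) * tg) * (p0 v * ∑ σ : (Fin N1 → U1) × (Fin N2 → U2),
            ((∏ k, p1 v (σ.1 k)) * (∏ l, p2 v (σ.2 l))) *
              ind (∃ (k : Fin N1) (l : Fin N2), 0 < W v (σ.1 k) (σ.2 l))) := by
      intro v
      have hcovnn : 0 ≤ ∑ σ : (Fin N1 → U1) × (Fin N2 → U2),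
          ((∏ k, p1 v (σ.1 k)) * (∏ l, p2 v (σ.2 l))) *
            ind (∃ (k : Fin N1) (l : Fin N2), 0 < W v (σ.1 k) (σ.2 l)) :=
        Finset.sum_nonneg fun σ _ => mul_nonneg
          (mul_nonneg (Finset.prod_nonneg fun k _ => hp1 _ _)
            (Finset.prod_nonneg fun l _ => hp2 _ _)) (ind_nonneg _)
      rcases eq_or_lt_of_le (hψnn v) with h0 | hψv
      · rw [← h0]
        exact mul_nonneg (mul_nonneg (mul_nonneg (mul_nonneg (by norm_num) hQ.le)
          hJ0R.le) htg.le) (mul_nonneg (hp0 v) hcovnn)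
      · have hp0v := hp0pos v hψv
        have hA : (0:ℝ) < Q * p0 v * ((J0:ℝ) * tg) :=
          mul_pos (mul_pos hQ hp0v) (mul_pos hJ0R htg)
        have hAnn : (0:ℝ) ≤ Q * p0 v * ((J0:ℝ) * tg) := hA.le
        have hcov := mutual_covering (V1 := U1) (V2 := U2) hN1 hN2
          (p1 v) (p2 v) (hp1 v) (hp2 v) (hp1s v) (hp2s v)
          (fun x y => W v x y) (fun x y => hW v x y) hA
          (fun x y => by
            rcases eq_or_lt_of_le (hW v x y) with h0 | hpos
            · rw [← h0]
              exact mul_nonneg (mul_nonneg (mul_nonneg hAnn (Nat.cast_nonneg N1))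
                (Nat.cast_nonneg N2)) (mul_nonneg (hp1 v x) (hp2 v y))
            · exact hpair v x y hpos)
          (fun x => by
            rcases eq_or_lt_of_le (Finset.sum_nonneg fun y (_ : y ∈ univ) => hW v x y)
              with h0 | hpos
            · rw [← h0]
              exact mul_nonneg (mul_nonneg hAnn (Nat.cast_nonneg N1)) (hp1 v x)
            · exact hrow v x hpos)
          (fun y => by
            rcases eq_or_lt_of_le (Finset.sum_nonneg fun x (_ : x ∈ univ) => hW v x y)
              with h0 | hpos
            · rw [← h0]
              exact mul_nonneg (mul_nonneg hAnn (Nat.cast_nonneg N2)) (hp2 v y)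
            · exact hcol v y hpos)
          (htot v hψv)
        rw [div_le_iff₀ (by linarith : (0:ℝ) < 4 * (Q * p0 v * ((J0:ℝ) * tg)))] at hcov
        calc ∑ x, ∑ y, W v x y
            ≤ (∑ σ : (Fin N1 → U1) × (Fin N2 → U2),
                ((∏ k, p1 v (σ.1 k)) * (∏ l, p2 v (σ.2 l))) *
                  ind (∃ (k : Fin N1) (l : Fin N2), 0 < W v (σ.1 k) (σ.2 l))) *
                (4 * (Q * p0 v * ((J0:ℝ) * tg))) := hcov
          _ = (4 * Q * (J0:ℝ) * tg) * (p0 v * ∑ σ : (Fin N1 → U1) × (Fin N2 → U2),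
                ((∏ k, p1 v (σ.1 k)) * (∏ l, p2 v (σ.2 l))) *
                  ind (∃ (k : Fin N1) (l : Fin N2), 0 < W v (σ.1 k) (σ.2 l))) := by
              ring
    calc ∑ v, ∑ x, ∑ y, W v x y
        ≤ ∑ v, (4 * Q * (J0:ℝ) * tg) * (p0 v * ∑ σ : (Fin N1 → U1) × (Fin N2 → U2),
            ((∏ k, p1 v (σ.1 k)) * (∏ l, p2 v (σ.2 l))) *
              ind (∃ (k : Fin N1) (l : Fin N2), 0 < W v (σ.1 k) (σ.2 l))) :=
          Finset.sum_le_sum fun v _ => hperv v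
      _ = _ := by rw [← Finset.mul_sum]
  -- step 4 : conclude via exponential and convexity
  rw [hstep1, hstep2]
  set φ : ℝ := ∑ b : U0 × (Fin N1 → U1) × (Fin N2 → U2),
      p0 b.1 * ((∏ k, p1 b.1 (b.2.1 k)) * (∏ l, p2 b.1 (b.2.2 l))) *
        ind (∃ (k : Fin N1) (l : Fin N2), 0 < W b.1 (b.2.1 k) (b.2.2 l)) with hφdef
  set Wt : ℝ := ∑ v, ∑ x, ∑ y, W v x y with hWtdef
  -- (1-φ)^J0 ≤ exp (-J0 * φ)
  have hexp1 : (1 - φ) ^ J0 ≤ Real.exp (-((J0:ℝ) * φ)) := by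
    have h1 : (1 - φ) ≤ Real.exp (-φ) := by
      have := Real.add_one_le_exp (-φ); linarith
    have h2 : (1 - φ) ^ J0 ≤ (Real.exp (-φ)) ^ J0 :=
      pow_le_pow_left₀ (by linarith) h1 J0
    calc (1 - φ) ^ J0 ≤ (Real.exp (-φ)) ^ J0 := h2
      _ = Real.exp ((J0:ℝ) * (-φ)) := by rw [← Real.exp_nat_mul]
      _ = Real.exp (-((J0:ℝ) * φ)) := by ring_nf
  -- exponent comparison
  have hexp2 : Real.exp (-((J0:ℝ) * φ)) ≤ Real.exp (-(Wt / (4 * Q * tg))) := by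
    apply Real.exp_le_exp.mpr
    have h1 : Wt / (4 * Q * tg) ≤ (J0:ℝ) * φ := by
      rw [div_le_iff₀ (mul_pos (mul_pos (by norm_num : (0:ℝ) < 4) hQ) htg)]
      calc Wt ≤ (4 * Q * (J0:ℝ) * tg) * φ := hstep3
        _ = (J0:ℝ) * φ * (4 * Q * tg) := by ring
    linarith
  -- convexity of exp
  set θ : ℝ := Wt / Q with hθdef
  have hθ0 : 0 ≤ θ := div_nonneg hWtotnn hQ.le
  have hθ1 : θ ≤ 1 := by
    rw [hθdef, div_le_one hQ]
    exact hWQ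
  have hWtθ : Wt = θ * Q := by
    rw [hθdef, div_mul_cancel₀ _ (ne_of_gt hQ)]
  have hexpform : -(Wt / (4 * Q * tg)) = (1 - θ) * 0 + θ * (-(1 / (4 * tg))) := by
    rw [hWtθ]
    field_simp [ne_of_gt hQ, ne_of_gt htg]
    ring
  have hconv : Real.exp ((1 - θ) * 0 + θ * (-(1 / (4 * tg))))
      ≤ (1 - θ) * Real.exp 0 + θ * Real.exp (-(1 / (4 * tg))) := by
    have := convexOn_exp.2 (Set.mem_univ (0:ℝ)) (Set.mem_univ (-(1 / (4 * tg))))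
      (by linarith : (0:ℝ) ≤ 1 - θ) hθ0 (by ring)
    simpa [smul_eq_mul] using this
  have hexpc : Real.exp (-(1 / (4 * tg))) ≤ 4 * tg := by
    have hc : (0:ℝ) < 1 / (4 * tg) := div_pos one_pos (by linarith)
    have h1 : 1 / (4 * tg) < Real.exp (1 / (4 * tg)) := by
      have := Real.add_one_le_exp (1 / (4 * tg)); linarith
    have h2 : Real.exp (-(1 / (4 * tg))) = (Real.exp (1 / (4 * tg)))⁻¹ := by
      rw [Real.exp_neg]
    rw [h2]
    have h3 : (Real.exp (1 / (4 * tg)))⁻¹ ≤ (1 / (4 * tg))⁻¹ :=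
      inv_anti₀ hc h1.le
    calc (Real.exp (1 / (4 * tg)))⁻¹ ≤ (1 / (4 * tg))⁻¹ := h3
      _ = 4 * tg := by field_simp
  -- put it together
  have hmiss : (1 - φ) ^ J0 ≤ 1 - θ + 4 * tg := by
    calc (1 - φ) ^ J0 ≤ Real.exp (-((J0:ℝ) * φ)) := hexp1
      _ ≤ Real.exp (-(Wt / (4 * Q * tg))) := hexp2
      _ = Real.exp ((1 - θ) * 0 + θ * (-(1 / (4 * tg)))) := by rw [hexpform]
      _ ≤ (1 - θ) * Real.exp 0 + θ * Real.exp (-(1 / (4 * tg))) := hconv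
      _ = 1 - θ + θ * Real.exp (-(1 / (4 * tg))) := by rw [Real.exp_zero]; ring
      _ ≤ 1 - θ + 4 * tg := by
          have h1 : θ * Real.exp (-(1 / (4 * tg))) ≤ 1 * (4 * tg) := by
            apply mul_le_mul hθ1 hexpc (Real.exp_nonneg _) (by norm_num)
          linarith
  calc Q * (1 - φ) ^ J0 ≤ Q * (1 - θ + 4 * tg) :=
        mul_le_mul_of_nonneg_left hmiss hQ.le
    _ = Q - Wt + Q * (4 * tg) := by
        rw [hWtθ]; ring

end Layered
section PerS

open Finset

variable {S U0 U1 U2 R0 R1 R2 : Type}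
  [Fintype S] [Fintype U0] [Fintype U1] [Fintype U2]
  [Fintype R0] [Fintype R1] [Fintype R2]

set_option maxHeartbeats 4000000 in
lemma per_s_bound (qS : FinPMF S) (qU : S → FinPMF (U0 × U1 × U2))
    [Nonempty U1] [Nonempty U2]
    (d0 : S → R0 → ℝ) (d1 : S → R1 → ℝ) (d2 : S → R2 → ℝ) (D0 D1 D2 : ℝ)
    (g0 : U0 → U1 → U2 → R0) (g1 : U0 → U1 → R1) (g2 : U0 → U2 → R2)
    {M1 M2 J0 N1 N2 : ℕ} (γ : ℝ)
    (hJ0 : 0 < J0) (hN1 : 0 < N1) (hN2 : 0 < N2)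
    (hM1 : M1 = J0 * N1) (hM2 : M2 = J0 * N2) (s : S) :
    qS.p s * (∑ ω : Fin J0 → U0 × (Fin N1 → U1) × (Fin N2 → U2),
        (∏ i, mU0 qS qU (ω i).1 * ((∏ k, pcU1 qS qU (ω i).1 ((ω i).2.1 k)) *
          (∏ l, pcU2 qS qU (ω i).1 ((ω i).2.2 l)))) *
          ind (∀ (i : Fin J0) (k : Fin N1) (l : Fin N2),
            ¬ GoodP qS qU d0 d1 d2 D0 D1 D2 g0 g1 g2 M1 M2 J0 γ s
                ((ω i).1) ((ω i).2.1 k) ((ω i).2.2 l)))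
      ≤ (∑ u0, ∑ u1, ∑ u2, qMD qS qU s u0 u1 u2 *
          ind (EventP qS qU d0 d1 d2 D0 D1 D2 g0 g1 g2 M1 M2 J0 γ s u0 u1 u2))
        + qS.p s * (4 * (2:ℝ)^(-γ)) := by
  classical
  have hM1p : 0 < M1 := hM1 ▸ Nat.mul_pos hJ0 hN1
  have hM2p : 0 < M2 := hM2 ▸ Nat.mul_pos hJ0 hN2
  have htg : (0:ℝ) < (2:ℝ)^(-γ) := Real.rpow_pos_of_pos (by norm_num) _
  have hJ0R : (0:ℝ) < (J0:ℝ) := by exact_mod_cast hJ0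
  have hM1R : (M1:ℝ) = (J0:ℝ) * (N1:ℝ) := by rw [hM1]; push_cast; ring
  have hM2R : (M2:ℝ) = (J0:ℝ) * (N2:ℝ) := by rw [hM2]; push_cast; ring
  have hEnn : 0 ≤ ∑ u0, ∑ u1, ∑ u2, qMD qS qU s u0 u1 u2 *
      ind (EventP qS qU d0 d1 d2 D0 D1 D2 g0 g1 g2 M1 M2 J0 γ s u0 u1 u2) :=
    Finset.sum_nonneg fun u0 _ => Finset.sum_nonneg fun u1 _ =>
      Finset.sum_nonneg fun u2 _ =>
        mul_nonneg (qMD_nonneg qS qU s u0 u1 u2) (ind_nonneg _)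
  rcases eq_or_lt_of_le (qS.nonneg s) with hQ0 | hQ
  · rw [← hQ0]
    simp only [zero_mul, add_zero]
    exact hEnn
  -- rewrite the indicator in terms of positivity of WF
  have hind : ∀ ω : Fin J0 → U0 × (Fin N1 → U1) × (Fin N2 → U2),
      ind (∀ (i : Fin J0) (k : Fin N1) (l : Fin N2),
        ¬ GoodP qS qU d0 d1 d2 D0 D1 D2 g0 g1 g2 M1 M2 J0 γ s
            ((ω i).1) ((ω i).2.1 k) ((ω i).2.2 l))
      = ind (∀ (i : Fin J0) (k : Fin N1) (l : Fin N2),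
          ¬ (0 < WF qS qU d0 d1 d2 D0 D1 D2 g0 g1 g2 M1 M2 J0 γ s
              ((ω i).1) ((ω i).2.1 k) ((ω i).2.2 l))) := by
    intro ω
    apply ind_congr
    constructor
    · intro h i k l hpos
      exact h i k l (WF_pos_good hpos)
    · intro h i k l hg
      refine h i k l ?_
      rw [good_WF_eq hg]
      exact hg.1
  simp_rw [hind]
  -- hypotheses for layered_bound
  have hWQ : ∑ v, ∑ x, ∑ y, WF qS qU d0 d1 d2 D0 D1 D2 g0 g1 g2 M1 M2 J0 γ s v x y
      ≤ qS.p s := by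
    rw [← sum_qMD qS qU s]
    exact Finset.sum_le_sum fun v _ => Finset.sum_le_sum fun x _ =>
      Finset.sum_le_sum fun y _ => WF_le_qMD qS qU d0 d1 d2 D0 D1 D2 g0 g1 g2 M1 M2 J0 γ s v x y
  have hpair : ∀ v x y,
      0 < WF qS qU d0 d1 d2 D0 D1 D2 g0 g1 g2 M1 M2 J0 γ s v x y →
      WF qS qU d0 d1 d2 D0 D1 D2 g0 g1 g2 M1 M2 J0 γ s v x y
        ≤ (qS.p s * mU0 qS qU v * ((J0:ℝ) * (2:ℝ)^(-γ))) * N1 * N2 *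
            (pcU1 qS qU v x * pcU2 qS qU v y) := by
    intro v x y hpos
    have hg := WF_pos_good hpos
    obtain ⟨hqs, -, hmU0v, -, hmU01, -, hmU02, -⟩ := atom_pos hg.1
    have h4 := good_cond4 hJ0 hM1p hM2p hg
    rw [good_WF_eq hg]
    have hpc1x : pcU1 qS qU v x = mU01 qS qU v x / mU0 qS qU v := by
      simp only [pcU1, if_neg (ne_of_gt hmU0v)]
    have hpc2y : pcU2 qS qU v y = mU02 qS qU v y / mU0 qS qU v := by
      simp only [pcU2, if_neg (ne_of_gt hmU0v)]
    rw [hpc1x, hpc2y]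
    have key : (qS.p s * mU0 qS qU v * ((J0:ℝ) * (2:ℝ)^(-γ))) * N1 * N2 *
        (mU01 qS qU v x / mU0 qS qU v * (mU02 qS qU v y / mU0 qS qU v))
        = qS.p s * (mU01 qS qU v x * mU02 qS qU v y) *
            (((M1:ℝ) * (M2:ℝ) / (J0:ℝ)) * (2:ℝ)^(-γ)) / mU0 qS qU v := by
      rw [hM1R, hM2R]
      field_simp
    rw [key, le_div_iff₀ hmU0v]
    exact h4
  have hrow : ∀ v x,
      0 < ∑ y, WF qS qU d0 d1 d2 D0 D1 D2 g0 g1 g2 M1 M2 J0 γ s v x y →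
      ∑ y, WF qS qU d0 d1 d2 D0 D1 D2 g0 g1 g2 M1 M2 J0 γ s v x y
        ≤ (qS.p s * mU0 qS qU v * ((J0:ℝ) * (2:ℝ)^(-γ))) * N1 * pcU1 qS qU v x := by
    intro v x hpos
    obtain ⟨y, hy⟩ := sum_pos_exists_pos
      (fun y => WF_nonneg qS qU d0 d1 d2 D0 D1 D2 g0 g1 g2 M1 M2 J0 γ s v x y) hpos
    have hg := WF_pos_good hy
    obtain ⟨hqs, -, hmU0v, -, hmU01, -, -, -⟩ := atom_pos hg.1
    have h2 := good_cond2 hM1p hg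
    have hle : ∑ y, WF qS qU d0 d1 d2 D0 D1 D2 g0 g1 g2 M1 M2 J0 γ s v x y
        ≤ mSU01 qS qU s v x := by
      refine le_trans (Finset.sum_le_sum fun y _ =>
        WF_le_qMD qS qU d0 d1 d2 D0 D1 D2 g0 g1 g2 M1 M2 J0 γ s v x y) ?_
      exact le_of_eq rfl
    have hpc1x : pcU1 qS qU v x = mU01 qS qU v x / mU0 qS qU v := by
      simp only [pcU1, if_neg (ne_of_gt hmU0v)]
    have key : (qS.p s * mU0 qS qU v * ((J0:ℝ) * (2:ℝ)^(-γ))) * N1 * pcU1 qS qU v x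
        = qS.p s * mU01 qS qU v x * ((M1:ℝ) * (2:ℝ)^(-γ)) := by
      rw [hpc1x, hM1R]
      field_simp
    rw [key]
    exact le_trans hle h2
  have hcol : ∀ v y,
      0 < ∑ x, WF qS qU d0 d1 d2 D0 D1 D2 g0 g1 g2 M1 M2 J0 γ s v x y →
      ∑ x, WF qS qU d0 d1 d2 D0 D1 D2 g0 g1 g2 M1 M2 J0 γ s v x y
        ≤ (qS.p s * mU0 qS qU v * ((J0:ℝ) * (2:ℝ)^(-γ))) * N2 * pcU2 qS qU v y := by
    intro v y hpos
    obtain ⟨x, hx⟩ := sum_pos_exists_pos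
      (fun x => WF_nonneg qS qU d0 d1 d2 D0 D1 D2 g0 g1 g2 M1 M2 J0 γ s v x y) hpos
    have hg := WF_pos_good hx
    obtain ⟨hqs, -, hmU0v, -, -, -, hmU02, -⟩ := atom_pos hg.1
    have h3 := good_cond3 hM2p hg
    have hle : ∑ x, WF qS qU d0 d1 d2 D0 D1 D2 g0 g1 g2 M1 M2 J0 γ s v x y
        ≤ mSU02 qS qU s v y := by
      refine le_trans (Finset.sum_le_sum fun x _ =>
        WF_le_qMD qS qU d0 d1 d2 D0 D1 D2 g0 g1 g2 M1 M2 J0 γ s v x y) ?_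
      exact le_of_eq rfl
    have hpc2y : pcU2 qS qU v y = mU02 qS qU v y / mU0 qS qU v := by
      simp only [pcU2, if_neg (ne_of_gt hmU0v)]
    have key : (qS.p s * mU0 qS qU v * ((J0:ℝ) * (2:ℝ)^(-γ))) * N2 * pcU2 qS qU v y
        = qS.p s * mU02 qS qU v y * ((M2:ℝ) * (2:ℝ)^(-γ)) := by
      rw [hpc2y, hM2R]
      field_simp
    rw [key]
    exact le_trans hle h3
  have htot : ∀ v,
      0 < ∑ x, ∑ y, WF qS qU d0 d1 d2 D0 D1 D2 g0 g1 g2 M1 M2 J0 γ s v x y →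
      ∑ x, ∑ y, WF qS qU d0 d1 d2 D0 D1 D2 g0 g1 g2 M1 M2 J0 γ s v x y
        ≤ qS.p s * mU0 qS qU v * ((J0:ℝ) * (2:ℝ)^(-γ)) := by
    intro v hpos
    obtain ⟨x, hx⟩ := sum_pos_exists_pos (fun x => Finset.sum_nonneg fun y _ =>
      WF_nonneg qS qU d0 d1 d2 D0 D1 D2 g0 g1 g2 M1 M2 J0 γ s v x y) hpos
    obtain ⟨y, hy⟩ := sum_pos_exists_pos
      (fun y => WF_nonneg qS qU d0 d1 d2 D0 D1 D2 g0 g1 g2 M1 M2 J0 γ s v x y) hx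
    have hg := WF_pos_good hy
    have h1 := good_cond1 hJ0 hg
    have hle : ∑ x, ∑ y, WF qS qU d0 d1 d2 D0 D1 D2 g0 g1 g2 M1 M2 J0 γ s v x y
        ≤ mSU0 qS qU s v := by
      refine le_trans (Finset.sum_le_sum fun x _ => Finset.sum_le_sum fun y _ =>
        WF_le_qMD qS qU d0 d1 d2 D0 D1 D2 g0 g1 g2 M1 M2 J0 γ s v x y) ?_
      exact le_of_eq rfl
    exact le_trans hle h1
  have hp0pos : ∀ v,
      0 < ∑ x, ∑ y, WF qS qU d0 d1 d2 D0 D1 D2 g0 g1 g2 M1 M2 J0 γ s v x y →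
      0 < mU0 qS qU v := by
    intro v hpos
    obtain ⟨x, hx⟩ := sum_pos_exists_pos (fun x => Finset.sum_nonneg fun y _ =>
      WF_nonneg qS qU d0 d1 d2 D0 D1 D2 g0 g1 g2 M1 M2 J0 γ s v x y) hpos
    obtain ⟨y, hy⟩ := sum_pos_exists_pos
      (fun y => WF_nonneg qS qU d0 d1 d2 D0 D1 D2 g0 g1 g2 M1 M2 J0 γ s v x y) hx
    have hg := WF_pos_good hy
    obtain ⟨-, -, hmU0v, -, -, -, -, -⟩ := atom_pos hg.1
    exact hmU0v
  have hlay := layered_bound hJ0 hN1 hN2 (mU0 qS qU) (pcU1 qS qU) (pcU2 qS qU)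
    (mU0_nonneg qS qU) (sum_mU0 qS qU) (pcU1_nonneg qS qU) (pcU1_sum qS qU)
    (pcU2_nonneg qS qU) (pcU2_sum qS qU)
    (WF qS qU d0 d1 d2 D0 D1 D2 g0 g1 g2 M1 M2 J0 γ s)
    (WF_nonneg qS qU d0 d1 d2 D0 D1 D2 g0 g1 g2 M1 M2 J0 γ s)
    hQ htg hWQ hpair hrow hcol htot hp0pos
  -- identity : Q - Wt = sum of qMD * ind Event
  have hpt : ∀ u0 u1 u2, qMD qS qU s u0 u1 u2 -
      WF qS qU d0 d1 d2 D0 D1 D2 g0 g1 g2 M1 M2 J0 γ s u0 u1 u2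
      = qMD qS qU s u0 u1 u2 *
          ind (EventP qS qU d0 d1 d2 D0 D1 D2 g0 g1 g2 M1 M2 J0 γ s u0 u1 u2) := by
    intro u0 u1 u2
    rcases eq_or_lt_of_le (qMD_nonneg qS qU s u0 u1 u2) with h0 | hq
    · rw [WF, ← h0]
      simp
    · by_cases he : EventP qS qU d0 d1 d2 D0 D1 D2 g0 g1 g2 M1 M2 J0 γ s u0 u1 u2
      · rw [ind_true he, mul_one, WF, ind_false (fun hg => hg.2 he), mul_zero, sub_zero]
      · rw [ind_false he, mul_zero, WF, ind_true ⟨hq, he⟩, mul_one, sub_self]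
  have hid : qS.p s -
      (∑ v, ∑ x, ∑ y, WF qS qU d0 d1 d2 D0 D1 D2 g0 g1 g2 M1 M2 J0 γ s v x y)
      = ∑ u0, ∑ u1, ∑ u2, qMD qS qU s u0 u1 u2 *
          ind (EventP qS qU d0 d1 d2 D0 D1 D2 g0 g1 g2 M1 M2 J0 γ s u0 u1 u2) := by
    conv_lhs => rw [← sum_qMD qS qU s]
    rw [← Finset.sum_sub_distrib]
    refine Finset.sum_congr rfl fun u0 _ => ?_
    rw [← Finset.sum_sub_distrib]
    refine Finset.sum_congr rfl fun u1 _ => ?_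
    rw [← Finset.sum_sub_distrib]
    exact Finset.sum_congr rfl fun u2 _ => hpt u0 u1 u2
  linarith [hlay, hid.symm.le, hid.le]

end PerS
section CodeConstruction

open Finset

variable {S U0 U1 U2 R0 R1 R2 : Type}
  [Fintype S] [Fintype U0] [Fintype U1] [Fintype U2]
  [Fintype R0] [Fintype R1] [Fintype R2]

open Classical in
lemma sum3_dirac (c : ℝ) (a0 : R0) (a1 : R1) (a2 : R2) (P : R0 → R1 → R2 → Prop) :
    ∑ r0, ∑ r1, ∑ r2, c * (FinPMF.dirac a0).p r0 * (FinPMF.dirac a1).p r1 *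
      (FinPMF.dirac a2).p r2 * ind (P r0 r1 r2) = c * ind (P a0 a1 a2) := by
  classical
  simp only [FinPMF.dirac]
  simp [ite_mul, mul_ite, mul_zero, zero_mul, mul_one, Finset.sum_ite_eq']

/-- encoder: likelihood encoder restricted to good triples -/
noncomputable def encMD (qS : FinPMF S) (qU : S → FinPMF (U0 × U1 × U2))
    (d0 : S → R0 → ℝ) (d1 : S → R1 → ℝ) (d2 : S → R2 → ℝ) (D0 D1 D2 : ℝ)
    (g0 : U0 → U1 → U2 → R0) (g1 : U0 → U1 → R1) (g2 : U0 → U2 → R2)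
    (M1 M2 J0 N1 N2 : ℕ) (γ : ℝ)
    (e1 : Fin J0 × Fin N1 ≃ Fin M1) (e2 : Fin J0 × Fin N2 ≃ Fin M2)
    (t0 : Fin J0 × Fin N1 × Fin N2)
    (ω : Fin J0 → U0 × (Fin N1 → U1) × (Fin N2 → U2)) (s : S) :
    FinPMF (Fin M1 × Fin M2) :=
  FinPMF.map (fun t : Fin J0 × Fin N1 × Fin N2 => (e1 (t.1, t.2.1), e2 (t.1, t.2.2)))
    (FinPMF.norm
      (fun t : Fin J0 × Fin N1 × Fin N2 => WF qS qU d0 d1 d2 D0 D1 D2 g0 g1 g2 M1 M2 J0 γ s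
        ((ω t.1).1) ((ω t.1).2.1 t.2.1) ((ω t.1).2.2 t.2.2))
      (fun t => WF_nonneg qS qU d0 d1 d2 D0 D1 D2 g0 g1 g2 M1 M2 J0 γ s _ _ _) t0)

noncomputable def dec0MD (g0 : U0 → U1 → U2 → R0) {M1 M2 J0 N1 N2 : ℕ}
    (e1 : Fin J0 × Fin N1 ≃ Fin M1) (e2 : Fin J0 × Fin N2 ≃ Fin M2)
    (ω : Fin J0 → U0 × (Fin N1 → U1) × (Fin N2 → U2)) (m : Fin M1 × Fin M2) :
    FinPMF R0 :=
  FinPMF.dirac (g0 ((ω (e1.symm m.1).1).1) ((ω (e1.symm m.1).1).2.1 (e1.symm m.1).2)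
    ((ω (e2.symm m.2).1).2.2 (e2.symm m.2).2))

noncomputable def dec1MD (g1 : U0 → U1 → R1) {M1 J0 N1 : ℕ}
    (e1 : Fin J0 × Fin N1 ≃ Fin M1)
    (ω : Fin J0 → U0 × (Fin N1 → U1) × (Fin N2 → U2)) (m1 : Fin M1) :
    FinPMF R1 :=
  FinPMF.dirac (g1 ((ω (e1.symm m1).1).1) ((ω (e1.symm m1).1).2.1 (e1.symm m1).2))

noncomputable def dec2MD (g2 : U0 → U2 → R2) {M2 J0 N2 : ℕ}
    (e2 : Fin J0 × Fin N2 ≃ Fin M2)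
    (ω : Fin J0 → U0 × (Fin N1 → U1) × (Fin N2 → U2)) (m2 : Fin M2) :
    FinPMF R2 :=
  FinPMF.dirac (g2 ((ω (e2.symm m2).1).1) ((ω (e2.symm m2).1).2.2 (e2.symm m2).2))

set_option maxHeartbeats 4000000 in
lemma code_bound (qS : FinPMF S) (qU : S → FinPMF (U0 × U1 × U2))
    (d0 : S → R0 → ℝ) (d1 : S → R1 → ℝ) (d2 : S → R2 → ℝ) (D0 D1 D2 : ℝ)
    (g0 : U0 → U1 → U2 → R0) (g1 : U0 → U1 → R1) (g2 : U0 → U2 → R2)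
    {M1 M2 J0 N1 N2 : ℕ} (γ : ℝ)
    (e1 : Fin J0 × Fin N1 ≃ Fin M1) (e2 : Fin J0 × Fin N2 ≃ Fin M2)
    (t0 : Fin J0 × Fin N1 × Fin N2)
    (ω : Fin J0 → U0 × (Fin N1 → U1) × (Fin N2 → U2)) :
    pExcessMD M1 M2 qS d0 d1 d2 D0 D1 D2
      (encMD qS qU d0 d1 d2 D0 D1 D2 g0 g1 g2 M1 M2 J0 N1 N2 γ e1 e2 t0 ω)
      (dec0MD g0 e1 e2 ω) (dec1MD g1 e1 ω) (dec2MD g2 e2 ω)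
    ≤ ∑ s, qS.p s * ind (∀ (i : Fin J0) (k : Fin N1) (l : Fin N2),
        ¬ GoodP qS qU d0 d1 d2 D0 D1 D2 g0 g1 g2 M1 M2 J0 γ s
            ((ω i).1) ((ω i).2.1 k) ((ω i).2.2 l)) := by
  classical
  rw [pExcessMD]
  refine Finset.sum_le_sum fun s _ => ?_
  -- collapse the reconstruction sums
  have hcol : ∀ m : Fin M1 × Fin M2,
      (∑ r0, ∑ r1, ∑ r2, qS.p s *
        (encMD qS qU d0 d1 d2 D0 D1 D2 g0 g1 g2 M1 M2 J0 N1 N2 γ e1 e2 t0 ω s).p m *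
        (dec0MD g0 e1 e2 ω m).p r0 * (dec1MD g1 e1 ω m.1).p r1 *
        (dec2MD g2 e2 ω m.2).p r2 *
        ind (D0 < d0 s r0 ∨ D1 < d1 s r1 ∨ D2 < d2 s r2))
      = qS.p s *
        (encMD qS qU d0 d1 d2 D0 D1 D2 g0 g1 g2 M1 M2 J0 N1 N2 γ e1 e2 t0 ω s).p m *
        ind (D0 < d0 s (g0 ((ω (e1.symm m.1).1).1) ((ω (e1.symm m.1).1).2.1 (e1.symm m.1).2)
              ((ω (e2.symm m.2).1).2.2 (e2.symm m.2).2)) ∨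
            D1 < d1 s (g1 ((ω (e1.symm m.1).1).1) ((ω (e1.symm m.1).1).2.1 (e1.symm m.1).2)) ∨
            D2 < d2 s (g2 ((ω (e2.symm m.2).1).1) ((ω (e2.symm m.2).1).2.2 (e2.symm m.2).2))) := by
    intro m
    exact sum3_dirac _ _ _ _ (fun r0 r1 r2 => D0 < d0 s r0 ∨ D1 < d1 s r1 ∨ D2 < d2 s r2)
  simp_rw [hcol]
  by_cases hfail : ∀ (i : Fin J0) (k : Fin N1) (l : Fin N2),
      ¬ GoodP qS qU d0 d1 d2 D0 D1 D2 g0 g1 g2 M1 M2 J0 γ s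
          ((ω i).1) ((ω i).2.1 k) ((ω i).2.2 l)
  · rw [ind_true hfail, mul_one]
    have hstep : ∑ m : Fin M1 × Fin M2, qS.p s *
        (encMD qS qU d0 d1 d2 D0 D1 D2 g0 g1 g2 M1 M2 J0 N1 N2 γ e1 e2 t0 ω s).p m *
        ind (D0 < d0 s (g0 ((ω (e1.symm m.1).1).1) ((ω (e1.symm m.1).1).2.1 (e1.symm m.1).2)
              ((ω (e2.symm m.2).1).2.2 (e2.symm m.2).2)) ∨
            D1 < d1 s (g1 ((ω (e1.symm m.1).1).1) ((ω (e1.symm m.1).1).2.1 (e1.symm m.1).2)) ∨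
            D2 < d2 s (g2 ((ω (e2.symm m.2).1).1) ((ω (e2.symm m.2).1).2.2 (e2.symm m.2).2)))
        ≤ ∑ m : Fin M1 × Fin M2, qS.p s *
          (encMD qS qU d0 d1 d2 D0 D1 D2 g0 g1 g2 M1 M2 J0 N1 N2 γ e1 e2 t0 ω s).p m := by
      refine Finset.sum_le_sum fun m _ => ?_
      calc _ ≤ qS.p s *
          (encMD qS qU d0 d1 d2 D0 D1 D2 g0 g1 g2 M1 M2 J0 N1 N2 γ e1 e2 t0 ω s).p m * 1 :=
            mul_le_mul_of_nonneg_left (ind_le_one _)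
              (mul_nonneg (qS.nonneg s)
                ((encMD qS qU d0 d1 d2 D0 D1 D2 g0 g1 g2 M1 M2 J0 N1 N2 γ e1 e2 t0 ω s).nonneg m))
        _ = _ := mul_one _
    refine le_trans hstep (le_of_eq ?_)
    rw [← Finset.mul_sum,
      (encMD qS qU d0 d1 d2 D0 D1 D2 g0 g1 g2 M1 M2 J0 N1 N2 γ e1 e2 t0 ω s).sum_eq_one,
      mul_one]
  · -- a good triple exists: the encoder never errs
    rw [ind_false hfail, mul_zero]
    push_neg at hfail
    obtain ⟨i1, k1, l1, hgood⟩ := hfail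
    have hWpos : 0 < ∑ t : Fin J0 × Fin N1 × Fin N2,
        WF qS qU d0 d1 d2 D0 D1 D2 g0 g1 g2 M1 M2 J0 γ s
          ((ω t.1).1) ((ω t.1).2.1 t.2.1) ((ω t.1).2.2 t.2.2) := by
      apply Finset.sum_pos' (fun t _ => WF_nonneg qS qU d0 d1 d2 D0 D1 D2 g0 g1 g2 M1 M2 J0 γ s _ _ _)
      refine ⟨(i1, k1, l1), mem_univ _, ?_⟩
      rw [good_WF_eq hgood]
      exact hgood.1
    refine le_of_eq (Finset.sum_eq_zero fun m _ => ?_)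
    rcases eq_or_lt_of_le
      ((encMD qS qU d0 d1 d2 D0 D1 D2 g0 g1 g2 M1 M2 J0 N1 N2 γ e1 e2 t0 ω s).nonneg m)
      with h0 | hpos
    · rw [← h0, mul_zero, zero_mul]
    · -- find a good triple in the fiber of m
      have hfib : ∃ t : Fin J0 × Fin N1 × Fin N2,
          (e1 (t.1, t.2.1), e2 (t.1, t.2.2)) = m ∧
          0 < WF qS qU d0 d1 d2 D0 D1 D2 g0 g1 g2 M1 M2 J0 γ s
            ((ω t.1).1) ((ω t.1).2.1 t.2.1) ((ω t.1).2.2 t.2.2) := by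
        rw [encMD, FinPMF.map_apply] at hpos
        by_contra hc
        push_neg at hc
        refine absurd hpos (not_lt.mpr (Finset.sum_nonpos fun t ht => ?_))
        rw [FinPMF.norm_apply_of_pos hWpos]
        have hWt0 : WF qS qU d0 d1 d2 D0 D1 D2 g0 g1 g2 M1 M2 J0 γ s
            ((ω t.1).1) ((ω t.1).2.1 t.2.1) ((ω t.1).2.2 t.2.2) = 0 := by
          have h2 := hc t (Finset.mem_filter.mp ht).2
          exact le_antisymm h2 (WF_nonneg qS qU d0 d1 d2 D0 D1 D2 g0 g1 g2 M1 M2 J0 γ s _ _ _)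
        rw [hWt0, zero_div]
      obtain ⟨t, htm, htW⟩ := hfib
      have hgood2 := WF_pos_good htW
      have hne := hgood2.2
      rw [EventP] at hne
      push_neg at hne
      obtain ⟨he0, he1, he2, -, -, -, -⟩ := hne
      have hm1 : e1.symm m.1 = (t.1, t.2.1) := by
        rw [← htm]
        exact Equiv.symm_apply_apply e1 (t.1, t.2.1)
      have hm2 : e2.symm m.2 = (t.1, t.2.2) := by
        rw [← htm]
        exact Equiv.symm_apply_apply e2 (t.1, t.2.2)
      have hind0 : ind (D0 < d0 s (g0 ((ω (e1.symm m.1).1).1)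
            ((ω (e1.symm m.1).1).2.1 (e1.symm m.1).2)
            ((ω (e2.symm m.2).1).2.2 (e2.symm m.2).2)) ∨
          D1 < d1 s (g1 ((ω (e1.symm m.1).1).1) ((ω (e1.symm m.1).1).2.1 (e1.symm m.1).2)) ∨
          D2 < d2 s (g2 ((ω (e2.symm m.2).1).1) ((ω (e2.symm m.2).1).2.2 (e2.symm m.2).2))) = 0 := by
        rw [hm1, hm2]
        exact ind_false (by
          rintro (h | h | h)
          · exact absurd h (not_lt.mpr he0)
          · exact absurd h (not_lt.mpr he1)
          · exact absurd h (not_lt.mpr he2))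
      rw [hind0, mul_zero]

end CodeConstruction
section FinalAssembly

open Finset

variable {S U0 U1 U2 R0 R1 R2 : Type}
  [Fintype S] [Fintype U0] [Fintype U1] [Fintype U2]
  [Fintype R0] [Fintype R1] [Fintype R2]

lemma blocksum_one {N1 N2 : ℕ}
    (p0 : U0 → ℝ) (p1 : U0 → U1 → ℝ) (p2 : U0 → U2 → ℝ)
    (hp0s : ∑ v, p0 v = 1) (hp1s : ∀ v, ∑ x, p1 v x = 1)
    (hp2s : ∀ v, ∑ y, p2 v y = 1) :
    ∑ b : U0 × (Fin N1 → U1) × (Fin N2 → U2),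
      p0 b.1 * ((∏ k, p1 b.1 (b.2.1 k)) * (∏ l, p2 b.1 (b.2.2 l))) = 1 := by
  classical
  rw [Fintype.sum_prod_type]
  have h : ∀ v : U0, ∑ σ : (Fin N1 → U1) × (Fin N2 → U2),
      p0 v * ((∏ k, p1 v (σ.1 k)) * (∏ l, p2 v (σ.2 l))) = p0 v := by
    intro v
    rw [← Finset.mul_sum]
    have h2 : ∑ σ : (Fin N1 → U1) × (Fin N2 → U2),
        (∏ k, p1 v (σ.1 k)) * (∏ l, p2 v (σ.2 l)) = 1 := by
      rw [Fintype.sum_prod_type]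
      have h3 : ∀ xs : Fin N1 → U1,
          ∑ ys : Fin N2 → U2, (∏ k, p1 v (xs k)) * (∏ l, p2 v (ys l))
          = (∏ k, p1 v (xs k)) := by
        intro xs
        rw [← Finset.mul_sum, sum_pi_prod (fun _ y => p2 v y)]
        simp [hp2s v]
      simp_rw [h3]
      rw [sum_pi_prod (fun _ x => p1 v x)]
      simp [hp1s v]
    rw [h2, mul_one]
  simp_rw [h]
  exact hp0s

end FinalAssembly
set_option maxHeartbeats 4000000 in
/-- Loosened one-shot multiple description bound. -/
theorem oneShot_multiple_description_loosened (qS : FinPMF S)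
    (qU : S → FinPMF (U0 × U1 × U2))
    (d0 : S → R0 → ℝ) (d1 : S → R1 → ℝ) (d2 : S → R2 → ℝ)
    (hd0 : ∀ s r, 0 ≤ d0 s r) (hd1 : ∀ s r, 0 ≤ d1 s r) (hd2 : ∀ s r, 0 ≤ d2 s r)
    (D0 D1 D2 : ℝ) (hD0 : 0 ≤ D0) (hD1 : 0 ≤ D1) (hD2 : 0 ≤ D2)
    (g0 : U0 → U1 → U2 → R0) (g1 : U0 → U1 → R1) (g2 : U0 → U2 → R2)
    (M1 M2 J0 : ℕ) (hM1 : 0 < M1) (hM2 : 0 < M2) (hJ0 : 0 < J0)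
    (hJ01 : J0 ∣ M1) (hJ02 : J0 ∣ M2) (γ : ℝ) (hγ : 0 < γ) :
    ∃ (enc : S → FinPMF (Fin M1 × Fin M2)) (dec0 : Fin M1 × Fin M2 → FinPMF R0)
      (dec1 : Fin M1 → FinPMF R1) (dec2 : Fin M2 → FinPMF R2),
      pExcessMD M1 M2 qS d0 d1 d2 D0 D1 D2 enc dec0 dec1 dec2 ≤
        (∑ s : S, ∑ u0 : U0, ∑ u1 : U1, ∑ u2 : U2,
          qMD qS qU s u0 u1 u2 *
          ind (D0 < d0 s (g0 u0 u1 u2) ∨ D1 < d1 s (g1 u0 u1) ∨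
               D2 < d2 s (g2 u0 u2) ∨
               Real.logb 2 (J0 : ℝ) - iSU0 qS qU s u0 < γ ∨
               Real.logb 2 (M1 : ℝ) - iSU01 qS qU s u0 u1 < γ ∨
               Real.logb 2 (M2 : ℝ) - iSU02 qS qU s u0 u2 < γ ∨
               Real.logb 2 ((M1 : ℝ) * (M2 : ℝ) / (J0 : ℝ)) -
                 iSU012 qS qU s u0 u1 u2 - iU1U2cU0 qS qU u0 u1 u2 < γ))
        + 4 * (2 : ℝ) ^ (-γ) := by
  classical
  -- nonemptiness
  have hSne : Nonempty S := by
    by_contra h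
    haveI := not_nonempty_iff.mp h
    have h0 := qS.sum_eq_one
    rw [Finset.univ_eq_empty, Finset.sum_empty] at h0
    norm_num at h0
  obtain ⟨s0⟩ := hSne
  have hUne : Nonempty (U0 × U1 × U2) := by
    by_contra h
    haveI := not_nonempty_iff.mp h
    have h0 := (qU s0).sum_eq_one
    rw [Finset.univ_eq_empty, Finset.sum_empty] at h0
    norm_num at h0
  haveI hU1 : Nonempty U1 := Nonempty.map (fun u : U0 × U1 × U2 => u.2.1) hUne
  haveI hU2 : Nonempty U2 := Nonempty.map (fun u : U0 × U1 × U2 => u.2.2) hUne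
  set N1 := M1 / J0 with hN1def
  set N2 := M2 / J0 with hN2def
  have hM1eq : M1 = J0 * N1 := (Nat.mul_div_cancel' hJ01).symm
  have hM2eq : M2 = J0 * N2 := (Nat.mul_div_cancel' hJ02).symm
  have hN1 : 0 < N1 := Nat.div_pos (Nat.le_of_dvd hM1 hJ01) hJ0
  have hN2 : 0 < N2 := Nat.div_pos (Nat.le_of_dvd hM2 hJ02) hJ0
  have e1 : Fin J0 × Fin N1 ≃ Fin M1 := finProdFinEquiv.trans (finCongr hM1eq.symm)
  have e2 : Fin J0 × Fin N2 ≃ Fin M2 := finProdFinEquiv.trans (finCongr hM2eq.symm)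
  have t0 : Fin J0 × Fin N1 × Fin N2 := (⟨0, hJ0⟩, ⟨0, hN1⟩, ⟨0, hN2⟩)
  -- average over codebooks
  have hPrnn : ∀ ω : Fin J0 → U0 × (Fin N1 → U1) × (Fin N2 → U2),
      0 ≤ ∏ i, mU0 qS qU (ω i).1 * ((∏ k, pcU1 qS qU (ω i).1 ((ω i).2.1 k)) *
        (∏ l, pcU2 qS qU (ω i).1 ((ω i).2.2 l))) := by
    intro ω
    refine Finset.prod_nonneg fun i _ => mul_nonneg (mU0_nonneg qS qU _) ?_
    exact mul_nonneg (Finset.prod_nonneg fun k _ => pcU1_nonneg qS qU _ _)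
      (Finset.prod_nonneg fun l _ => pcU2_nonneg qS qU _ _)
  have hPr1 : ∑ ω : Fin J0 → U0 × (Fin N1 → U1) × (Fin N2 → U2),
      (∏ i, mU0 qS qU (ω i).1 * ((∏ k, pcU1 qS qU (ω i).1 ((ω i).2.1 k)) *
        (∏ l, pcU2 qS qU (ω i).1 ((ω i).2.2 l)))) = 1 := by
    rw [sum_pi_prod (fun (_ : Fin J0) (b : U0 × (Fin N1 → U1) × (Fin N2 → U2)) =>
      mU0 qS qU b.1 * ((∏ k, pcU1 qS qU b.1 (b.2.1 k)) * (∏ l, pcU2 qS qU b.1 (b.2.2 l))))]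
    rw [Finset.prod_congr rfl (fun (i : Fin J0) _ =>
      blocksum_one (mU0 qS qU) (pcU1 qS qU) (pcU2 qS qU) (sum_mU0 qS qU)
        (pcU1_sum qS qU) (pcU2_sum qS qU))]
    exact Finset.prod_const_one
  have havg : ∑ ω : Fin J0 → U0 × (Fin N1 → U1) × (Fin N2 → U2),
      (∏ i, mU0 qS qU (ω i).1 * ((∏ k, pcU1 qS qU (ω i).1 ((ω i).2.1 k)) *
        (∏ l, pcU2 qS qU (ω i).1 ((ω i).2.2 l)))) *
      (∑ s, qS.p s * ind (∀ (i : Fin J0) (k : Fin N1) (l : Fin N2),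
        ¬ GoodP qS qU d0 d1 d2 D0 D1 D2 g0 g1 g2 M1 M2 J0 γ s
            ((ω i).1) ((ω i).2.1 k) ((ω i).2.2 l)))
      ≤ (∑ s : S, ∑ u0 : U0, ∑ u1 : U1, ∑ u2 : U2,
          qMD qS qU s u0 u1 u2 *
          ind (EventP qS qU d0 d1 d2 D0 D1 D2 g0 g1 g2 M1 M2 J0 γ s u0 u1 u2))
        + 4 * (2 : ℝ) ^ (-γ) := by
    have hswap : ∑ ω : Fin J0 → U0 × (Fin N1 → U1) × (Fin N2 → U2),
        (∏ i, mU0 qS qU (ω i).1 * ((∏ k, pcU1 qS qU (ω i).1 ((ω i).2.1 k)) *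
          (∏ l, pcU2 qS qU (ω i).1 ((ω i).2.2 l)))) *
        (∑ s, qS.p s * ind (∀ (i : Fin J0) (k : Fin N1) (l : Fin N2),
          ¬ GoodP qS qU d0 d1 d2 D0 D1 D2 g0 g1 g2 M1 M2 J0 γ s
              ((ω i).1) ((ω i).2.1 k) ((ω i).2.2 l)))
        = ∑ s, qS.p s * (∑ ω : Fin J0 → U0 × (Fin N1 → U1) × (Fin N2 → U2),
            (∏ i, mU0 qS qU (ω i).1 * ((∏ k, pcU1 qS qU (ω i).1 ((ω i).2.1 k)) *
              (∏ l, pcU2 qS qU (ω i).1 ((ω i).2.2 l)))) *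
            ind (∀ (i : Fin J0) (k : Fin N1) (l : Fin N2),
              ¬ GoodP qS qU d0 d1 d2 D0 D1 D2 g0 g1 g2 M1 M2 J0 γ s
                  ((ω i).1) ((ω i).2.1 k) ((ω i).2.2 l))) := by
      simp_rw [Finset.mul_sum]
      rw [Finset.sum_comm]
      refine Finset.sum_congr rfl fun s _ => ?_
      refine Finset.sum_congr rfl fun ω _ => ?_
      ring
    rw [hswap]
    have hper : ∀ s : S, qS.p s * (∑ ω : Fin J0 → U0 × (Fin N1 → U1) × (Fin N2 → U2),
        (∏ i, mU0 qS qU (ω i).1 * ((∏ k, pcU1 qS qU (ω i).1 ((ω i).2.1 k)) *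
          (∏ l, pcU2 qS qU (ω i).1 ((ω i).2.2 l)))) *
        ind (∀ (i : Fin J0) (k : Fin N1) (l : Fin N2),
          ¬ GoodP qS qU d0 d1 d2 D0 D1 D2 g0 g1 g2 M1 M2 J0 γ s
              ((ω i).1) ((ω i).2.1 k) ((ω i).2.2 l)))
        ≤ (∑ u0, ∑ u1, ∑ u2, qMD qS qU s u0 u1 u2 *
            ind (EventP qS qU d0 d1 d2 D0 D1 D2 g0 g1 g2 M1 M2 J0 γ s u0 u1 u2))
          + qS.p s * (4 * (2:ℝ)^(-γ)) :=
      fun s => per_s_bound qS qU d0 d1 d2 D0 D1 D2 g0 g1 g2 γ hJ0 hN1 hN2 hM1eq hM2eq s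
    calc ∑ s, qS.p s * _ ≤ ∑ s, ((∑ u0, ∑ u1, ∑ u2, qMD qS qU s u0 u1 u2 *
            ind (EventP qS qU d0 d1 d2 D0 D1 D2 g0 g1 g2 M1 M2 J0 γ s u0 u1 u2))
          + qS.p s * (4 * (2:ℝ)^(-γ))) := Finset.sum_le_sum fun s _ => hper s
      _ = (∑ s : S, ∑ u0 : U0, ∑ u1 : U1, ∑ u2 : U2,
          qMD qS qU s u0 u1 u2 *
          ind (EventP qS qU d0 d1 d2 D0 D1 D2 g0 g1 g2 M1 M2 J0 γ s u0 u1 u2))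
        + 4 * (2 : ℝ) ^ (-γ) := by
          rw [Finset.sum_add_distrib, ← Finset.sum_mul, qS.sum_eq_one, one_mul]
  -- pick a good codebook
  have hex : ∃ ω : Fin J0 → U0 × (Fin N1 → U1) × (Fin N2 → U2),
      (∑ s, qS.p s * ind (∀ (i : Fin J0) (k : Fin N1) (l : Fin N2),
        ¬ GoodP qS qU d0 d1 d2 D0 D1 D2 g0 g1 g2 M1 M2 J0 γ s
            ((ω i).1) ((ω i).2.1 k) ((ω i).2.2 l)))
      ≤ (∑ s : S, ∑ u0 : U0, ∑ u1 : U1, ∑ u2 : U2,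
          qMD qS qU s u0 u1 u2 *
          ind (EventP qS qU d0 d1 d2 D0 D1 D2 g0 g1 g2 M1 M2 J0 γ s u0 u1 u2))
        + 4 * (2 : ℝ) ^ (-γ) := by
    by_contra hc
    push_neg at hc
    obtain ⟨ω0, hω0⟩ : ∃ ω : Fin J0 → U0 × (Fin N1 → U1) × (Fin N2 → U2),
        0 < ∏ i, mU0 qS qU (ω i).1 * ((∏ k, pcU1 qS qU (ω i).1 ((ω i).2.1 k)) *
          (∏ l, pcU2 qS qU (ω i).1 ((ω i).2.2 l))) := by
      by_contra h2
      push_neg at h2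
      have hz : ∑ ω : Fin J0 → U0 × (Fin N1 → U1) × (Fin N2 → U2),
          (∏ i, mU0 qS qU (ω i).1 * ((∏ k, pcU1 qS qU (ω i).1 ((ω i).2.1 k)) *
            (∏ l, pcU2 qS qU (ω i).1 ((ω i).2.2 l)))) = 0 := by
        refine Finset.sum_eq_zero fun ω _ => le_antisymm (h2 ω) (hPrnn ω)
      rw [hz] at hPr1
      norm_num at hPr1
    have hlt : ∑ ω : Fin J0 → U0 × (Fin N1 → U1) × (Fin N2 → U2),
        (∏ i, mU0 qS qU (ω i).1 * ((∏ k, pcU1 qS qU (ω i).1 ((ω i).2.1 k)) *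
          (∏ l, pcU2 qS qU (ω i).1 ((ω i).2.2 l)))) *
        ((∑ s : S, ∑ u0 : U0, ∑ u1 : U1, ∑ u2 : U2,
          qMD qS qU s u0 u1 u2 *
          ind (EventP qS qU d0 d1 d2 D0 D1 D2 g0 g1 g2 M1 M2 J0 γ s u0 u1 u2))
        + 4 * (2 : ℝ) ^ (-γ))
        < ∑ ω : Fin J0 → U0 × (Fin N1 → U1) × (Fin N2 → U2),
        (∏ i, mU0 qS qU (ω i).1 * ((∏ k, pcU1 qS qU (ω i).1 ((ω i).2.1 k)) *
          (∏ l, pcU2 qS qU (ω i).1 ((ω i).2.2 l)))) *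
        (∑ s, qS.p s * ind (∀ (i : Fin J0) (k : Fin N1) (l : Fin N2),
          ¬ GoodP qS qU d0 d1 d2 D0 D1 D2 g0 g1 g2 M1 M2 J0 γ s
              ((ω i).1) ((ω i).2.1 k) ((ω i).2.2 l))) := by
      refine Finset.sum_lt_sum (fun ω _ =>
        mul_le_mul_of_nonneg_left (le_of_lt (hc ω)) (hPrnn ω)) ⟨ω0, Finset.mem_univ ω0, ?_⟩
      exact mul_lt_mul_of_pos_left (hc ω0) hω0
    rw [← Finset.sum_mul, hPr1, one_mul] at hlt
    exact absurd havg (not_le.mpr (lt_of_lt_of_le hlt (le_refl _)))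
  obtain ⟨ωstar, hωstar⟩ := hex
  refine ⟨encMD qS qU d0 d1 d2 D0 D1 D2 g0 g1 g2 M1 M2 J0 N1 N2 γ e1 e2 t0 ωstar,
    dec0MD g0 e1 e2 ωstar, dec1MD g1 e1 ωstar, dec2MD g2 e2 ωstar, ?_⟩
  exact le_trans
    (code_bound qS qU d0 d1 d2 D0 D1 D2 g0 g1 g2 γ e1 e2 t0 ωstar) hωstar
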